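/- arXiv:1311.5299 — 14 statements merged into one kernel-verified Lean document; each statement's English description precedes it below -/
import Mathlib

section
/- A locally solvable Lie algebra (every finitely generated subalgebra is solvable) cannot be simple. -/
section Aux

variable {F L : Type*} [Field F] [LieRing L] [LieAlgebra F L]

/-- Iterated brackets of elements of `A` against `c`. -/
inductive Brk (c : L) (A : Set L) : L → Prop
  | base : Brk c A c
  | step {a w : L} : a ∈ A → Brk c A w → Brk c A ⁅a, w⁆

theorem Brk.mono {c : L} {A B : Set L} (hAB : A ⊆ B) {w : L} (h : Brk c A w) : Brk c B w := by
  induction h with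
  | base => exact Brk.base
  | step ha _ ih => exact Brk.step (hAB ha) ih

theorem Brk.finite {c w : L} (h : Brk c Set.univ w) : ∃ s : Finset L, Brk c (↑s) w := by
  classical
  induction h with
  | base => exact ⟨∅, Brk.base⟩
  | @step a w' _ _ ih =>
    obtain ⟨s, hs⟩ := ih
    exact ⟨insert a s, Brk.step (by simp) (hs.mono (by simp [Finset.coe_insert, Set.subset_insert]))⟩

/-- The span of iterated brackets. -/
noncomputable def brkSpan (c : L) (A : Set L) : Submodule F L :=
  Submodule.span F {w | Brk c A w}

theorem brkSpan_mono {c : L} {A B : Set L} (hAB : A ⊆ B) :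
    (brkSpan c A : Submodule F L) ≤ brkSpan c B :=
  Submodule.span_mono fun _ h => h.mono hAB

theorem brkSpan_lie_mem {c a : L} {A : Set L} (ha : a ∈ A) {m : L}
    (hm : m ∈ (brkSpan c A : Submodule F L)) : ⁅a, m⁆ ∈ (brkSpan c A : Submodule F L) := by
  induction hm using Submodule.span_induction with
  | mem w hw => exact Submodule.subset_span (Brk.step ha hw)
  | zero => simp
  | add u v _ _ hu hv => rw [lie_add]; exact Submodule.add_mem _ hu hv
  | smul t u _ hu => rw [lie_smul]; exact Submodule.smul_mem _ t hu

theorem brkSpan_finite {c z : L} (hz : z ∈ (brkSpan c Set.univ : Submodule F L)) :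
    ∃ s : Finset L, z ∈ (brkSpan c (↑s) : Submodule F L) := by
  classical
  induction hz using Submodule.span_induction with
  | mem w hw =>
    obtain ⟨s, hs⟩ := hw.finite
    exact ⟨s, Submodule.subset_span hs⟩
  | zero => exact ⟨∅, Submodule.zero_mem _⟩
  | add u v _ _ hu hv =>
    obtain ⟨s, hs⟩ := hu
    obtain ⟨t, ht⟩ := hv
    refine ⟨s ∪ t, Submodule.add_mem _ ?_ ?_⟩
    · exact brkSpan_mono (by simp [Finset.coe_union]) hs
    · exact brkSpan_mono (by simp [Finset.coe_union]) ht
  | smul t u _ hu =>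
    obtain ⟨s, hs⟩ := hu
    exact ⟨s, Submodule.smul_mem _ t hs⟩

/-- If `K` is an ideal of the subalgebra `S` containing `c`, then all iterated brackets
of elements of `S` against `c` lie in `K`. -/
theorem brk_mem_ideal {c : L} {S : LieSubalgebra F L} (hc : c ∈ S)
    (K : LieIdeal F S) (hcK : (⟨c, hc⟩ : S) ∈ K) {w : L} (hw : Brk c (↑S) w) :
    ∃ h : w ∈ S, (⟨w, h⟩ : S) ∈ K := by
  induction hw with
  | base => exact ⟨hc, hcK⟩
  | @step a w' ha _ ih =>
    obtain ⟨hw', hK⟩ := ih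
    refine ⟨S.lie_mem ha hw', ?_⟩
    have : ⁅(⟨a, ha⟩ : S), (⟨w', hw'⟩ : S)⁆ ∈ K := K.lie_mem hK
    exact this

theorem brkSpan_le_ideal {c : L} {S : LieSubalgebra F L} (hc : c ∈ S)
    (K : LieIdeal F S) (hcK : (⟨c, hc⟩ : S) ∈ K) {z : L} (hzS : z ∈ S)
    (hz : z ∈ (brkSpan c (↑S) : Submodule F L)) : (⟨z, hzS⟩ : S) ∈ K := by
  have hle : (brkSpan c (↑S) : Submodule F L) ≤
      (K : Submodule F S).map (S.toSubmodule.subtype) := by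
    rw [brkSpan, Submodule.span_le]
    rintro w hw
    obtain ⟨h, hK⟩ := brk_mem_ideal hc K hcK hw
    exact ⟨⟨w, h⟩, hK, rfl⟩
  obtain ⟨z', hz', hzz⟩ := hle hz
  have : z' = (⟨z, hzS⟩ : S) := Subtype.ext hzz
  rwa [this] at hz'

end Aux

/-- A locally solvable Lie algebra (every finitely generated Lie subalgebra is solvable)
cannot be simple. -/
theorem stmt1 {F L : Type*} [Field F] [LieRing L] [LieAlgebra F L]
    (hloc : ∀ s : Finset L,
      LieAlgebra.IsSolvable (LieSubalgebra.lieSpan F L (s : Set L))) :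
    ¬ LieAlgebra.IsSimple F L := by
  classical
  intro hs
  obtain ⟨x, y, hxy⟩ : ∃ x y : L, ⁅x, y⁆ ≠ 0 := by
    by_contra h
    push_neg at h
    exact hs.non_abelian ⟨fun a b => h a b⟩
  set c : L := ⁅x, y⁆ with hc
  -- The span of all iterated brackets against `c` is an ideal of `L`.
  let JL : LieIdeal F L :=
    { toSubmodule := brkSpan c Set.univ
      lie_mem := fun {a m} hm => brkSpan_lie_mem (Set.mem_univ a) hm }
  have hcJ : c ∈ JL := Submodule.subset_span Brk.base
  have htop : JL = ⊤ := by
    rcases hs.eq_bot_or_eq_top JL with h | h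
    · exfalso
      rw [h] at hcJ
      exact hxy (by simpa using hcJ)
    · exact h
  have hxJ : x ∈ (brkSpan c Set.univ : Submodule F L) := by
    have : x ∈ JL := htop ▸ LieSubmodule.mem_top x
    exact this
  have hyJ : y ∈ (brkSpan c Set.univ : Submodule F L) := by
    have : y ∈ JL := htop ▸ LieSubmodule.mem_top y
    exact this
  obtain ⟨sx, hsx⟩ := brkSpan_finite hxJ
  obtain ⟨sy, hsy⟩ := brkSpan_finite hyJ
  set t : Finset L := insert x (insert y (sx ∪ sy)) with ht
  set S : LieSubalgebra F L := LieSubalgebra.lieSpan F L (↑t : Set L) with hS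
  have hSolv : LieAlgebra.IsSolvable S := hloc t
  have hsub : (↑t : Set L) ⊆ S := LieSubalgebra.subset_lieSpan
  have hxS : x ∈ S := hsub (by simp [ht])
  have hyS : y ∈ S := hsub (by simp [ht])
  have hcS : c ∈ S := S.lie_mem hxS hyS
  have hxJS : x ∈ (brkSpan c (↑S) : Submodule F L) :=
    brkSpan_mono (fun a ha => hsub (by simp [ht, ha])) hsx
  have hyJS : y ∈ (brkSpan c (↑S) : Submodule F L) :=
    brkSpan_mono (fun a ha => hsub (by simp [ht, ha])) hsy
  -- By induction, `x` and `y` lie in every term of the derived series of `S`.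
  have key : ∀ n : ℕ, (⟨x, hxS⟩ : S) ∈ LieAlgebra.derivedSeries F S n ∧
      (⟨y, hyS⟩ : S) ∈ LieAlgebra.derivedSeries F S n := by
    intro n
    induction n with
    | zero => exact ⟨LieSubmodule.mem_top _, LieSubmodule.mem_top _⟩
    | succ n ih =>
      have hcD : (⟨c, hcS⟩ : S) ∈ LieAlgebra.derivedSeries F S (n + 1) := by
        rw [LieAlgebra.derivedSeries_def, LieAlgebra.derivedSeriesOfIdeal_succ]
        have : (⟨c, hcS⟩ : S) = ⁅(⟨x, hxS⟩ : S), (⟨y, hyS⟩ : S)⁆ := Subtype.ext rfl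
        rw [this]
        exact LieSubmodule.lie_mem_lie ih.1 ih.2
      exact ⟨brkSpan_le_ideal hcS _ hcD hxS hxJS, brkSpan_le_ideal hcS _ hcD hyS hyJS⟩
  obtain ⟨k, hk⟩ := (LieAlgebra.isSolvable_iff F S).mp hSolv
  have := (key k).1
  rw [hk] at this
  have hx0 : x = 0 := by simpa [LieSubmodule.mem_bot, Subtype.ext_iff] using this
  exact hxy (by rw [hc, hx0, zero_lie])
end

section
/- If R is a simple associative algebra with a nontrivial finite Z-grading R = R_{-n} ⊕ ... ⊕ R_n such that the union of the nonzero-degree components is nonzero, then R is generated as an algebra by the union of the nonzero-degree components ⋃_{i≠0} R_i. -/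
/-- If `R` is a simple associative algebra with a nontrivial finite `ℤ`-grading
`R = R₋ₙ ⊕ ⋯ ⊕ Rₙ` such that the union of the nonzero-degree components is nonzero,
then `R` is generated as an (associative, non-unital) algebra by `⋃_{i ≠ 0} R_i`. -/
theorem stmt2 {F R : Type*} [Field F] [Ring R] [Algebra F R] [IsSimpleRing R]
    (n : ℕ) (V : ℤ → Submodule F R)
    (hinternal : DirectSum.IsInternal V)
    (hmul : ∀ i j : ℤ, ∀ a ∈ V i, ∀ b ∈ V j, a * b ∈ V (i + j))
    (hbound : ∀ i : ℤ, (n : ℤ) < |i| → V i = ⊥)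
    (hnontriv : ∃ i : ℤ, i ≠ 0 ∧ V i ≠ ⊥) :
    NonUnitalAlgebra.adjoin F (⋃ i ∈ {i : ℤ | i ≠ 0}, (V i : Set R)) = ⊤ := by
  set S : Set R := ⋃ i ∈ {i : ℤ | i ≠ 0}, (V i : Set R) with hS
  set A := NonUnitalAlgebra.adjoin F S with hA
  -- homogeneous elements multiply A into A
  have key : ∀ (j : ℤ) (r : R), r ∈ V j → ∀ a ∈ A, r * a ∈ A ∧ a * r ∈ A := by
    intro j r hr a ha
    induction ha using NonUnitalAlgebra.adjoin_induction with
    | mem x hx =>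
      simp only [hS, Set.mem_iUnion, Set.mem_setOf_eq, SetLike.mem_coe] at hx
      obtain ⟨i, hi, hxi⟩ := hx
      rcases eq_or_ne j 0 with rfl | hj
      · constructor
        · have : r * x ∈ V i := by simpa using hmul 0 i r hr x hxi
          exact NonUnitalAlgebra.subset_adjoin F (Set.mem_iUnion₂.2 ⟨i, hi, this⟩)
        · have : x * r ∈ V i := by simpa using hmul i 0 x hxi r hr
          exact NonUnitalAlgebra.subset_adjoin F (Set.mem_iUnion₂.2 ⟨i, hi, this⟩)
      · have hrA : r ∈ A := NonUnitalAlgebra.subset_adjoin F (Set.mem_iUnion₂.2 ⟨j, hj, hr⟩)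
        have hxA : x ∈ A := NonUnitalAlgebra.subset_adjoin F (Set.mem_iUnion₂.2 ⟨i, hi, hxi⟩)
        exact ⟨mul_mem hrA hxA, mul_mem hxA hrA⟩
    | add x y hx hy ihx ihy =>
      exact ⟨by rw [mul_add]; exact add_mem ihx.1 ihy.1,
             by rw [add_mul]; exact add_mem ihx.2 ihy.2⟩
    | zero => simp only [mul_zero, zero_mul]; exact ⟨zero_mem A, zero_mem A⟩
    | mul x y hx hy ihx ihy =>
      exact ⟨by rw [← mul_assoc]; exact mul_mem ihx.1 hy,
             by rw [mul_assoc]; exact mul_mem hx ihy.2⟩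
    | smul c x hx ihx =>
      exact ⟨by rw [mul_smul_comm]; exact SMulMemClass.smul_mem c ihx.1,
             by rw [smul_mul_assoc]; exact SMulMemClass.smul_mem c ihx.2⟩
  -- arbitrary elements multiply A into A
  have key' : ∀ (r : R) (a : R), a ∈ A → r * a ∈ A ∧ a * r ∈ A := by
    intro r a ha
    have hr : r ∈ iSup V := by
      rw [hinternal.submodule_iSup_eq_top]; trivial
    induction hr using Submodule.iSup_induction' with
    | mem j x hx => exact key j x hx a ha
    | zero => simp only [zero_mul, mul_zero]; exact ⟨zero_mem A, zero_mem A⟩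
    | add x y hx hy ihx ihy =>
      exact ⟨by rw [add_mul]; exact add_mem ihx.1 ihy.1,
             by rw [mul_add]; exact add_mem ihx.2 ihy.2⟩
  -- A is a two-sided ideal
  let I : TwoSidedIdeal R := TwoSidedIdeal.mk' (A : Set R) (zero_mem A)
    (fun hx hy => add_mem hx hy) (fun hx => neg_mem hx)
    (fun {x y} hy => (key' x y hy).1) (fun {x y} hx => (key' y x hx).2)
  have hImem : ∀ x : R, x ∈ I ↔ x ∈ A := fun x =>
    TwoSidedIdeal.mem_mk' _ _ _ _ _ _ x
  -- I is nonzero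
  obtain ⟨i, hi, hVi⟩ := hnontriv
  obtain ⟨x, hxV, hx0⟩ := Submodule.exists_mem_ne_zero_of_ne_bot hVi
  have hxA : x ∈ A := NonUnitalAlgebra.subset_adjoin F (Set.mem_iUnion₂.2 ⟨i, hi, hxV⟩)
  have hI : I = ⊤ := by
    rcases eq_bot_or_eq_top I with hbot | htop
    · exfalso
      have : x ∈ I := (hImem x).2 hxA
      rw [hbot] at this
      exact hx0 ((TwoSidedIdeal.mem_bot _).1 this)
    · exact htop
  -- conclude
  rw [eq_top_iff]
  intro y _
  have : y ∈ I := by rw [hI]; trivial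
  exact (hImem y).1 this
end

section
/- Let L be a simple, locally finite-dimensional Lie algebra over a field F. If φ is an element of the centroid of L which also lies in the multiplication algebra of L (the associative algebra of endomorphisms generated by all maps ad(a), a ∈ L), then φ is algebraic over F. -/
/-- Let `L` be a simple, locally finite-dimensional Lie algebra over a field `F`.
If `φ` lies both in the centroid of `L` (it commutes with all adjoint maps) and in the
multiplication algebra of `L` (the associative subalgebra of `End_F L` generated by the
maps `ad a`), then `φ` is algebraic over `F`. -/
theorem stmt4 {F L : Type*} [Field F] [LieRing L] [LieAlgebra F L]
    [LieAlgebra.IsSimple F L]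
    (hloc : ∀ s : Finset L,
      FiniteDimensional F (LieSubalgebra.lieSpan F L (s : Set L)))
    (φ : Module.End F L)
    (hcent : ∀ a b : L, φ ⁅a, b⁆ = ⁅a, φ b⁆ ∧ φ ⁅a, b⁆ = ⁅φ a, b⁆)
    (hmult : φ ∈ NonUnitalAlgebra.adjoin F
      (Set.range fun a : L => (LieAlgebra.ad F L a : Module.End F L))) :
    IsAlgebraic F φ := by
  classical
  -- L is nontrivial
  have hnt : Nontrivial L := by
    by_contra h
    rw [not_nontrivial_iff_subsingleton] at h
    exact LieAlgebra.IsSimple.non_abelian (R := F) (L := L)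
      ⟨fun a b => Subsingleton.elim _ _⟩
  obtain ⟨x, hx⟩ := exists_ne (0 : L)
  -- extract a finite set A such that φ preserves any Lie subalgebra containing A
  have key : ∀ ψ ∈ NonUnitalAlgebra.adjoin F
      (Set.range fun a : L => (LieAlgebra.ad F L a : Module.End F L)),
      ∃ A : Finset L, ∀ K : LieSubalgebra F L, (↑A : Set L) ⊆ K →
      ∀ y ∈ K, ψ y ∈ K := by
    intro ψ hψmem
    induction hψmem using NonUnitalAlgebra.adjoin_induction with
    | mem ψ hψ =>
      obtain ⟨a, rfl⟩ := hψ
      exact ⟨{a}, fun K hK y hy => K.lie_mem (hK (by simp)) hy⟩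
    | add ψ₁ ψ₂ h₁ h₂ ih₁ ih₂ =>
      obtain ⟨A₁, hA₁⟩ := ih₁; obtain ⟨A₂, hA₂⟩ := ih₂
      refine ⟨A₁ ∪ A₂, fun K hK y hy => ?_⟩
      have hs : (↑A₁ : Set L) ⊆ K ∧ (↑A₂ : Set L) ⊆ K := by
        constructor <;> intro z hz <;> exact hK (by simp [hz])
      exact K.add_mem (hA₁ K hs.1 y hy) (hA₂ K hs.2 y hy)
    | zero => exact ⟨∅, fun K _ y _ => K.zero_mem⟩
    | mul ψ₁ ψ₂ h₁ h₂ ih₁ ih₂ =>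
      obtain ⟨A₁, hA₁⟩ := ih₁; obtain ⟨A₂, hA₂⟩ := ih₂
      refine ⟨A₁ ∪ A₂, fun K hK y hy => ?_⟩
      have hs : (↑A₁ : Set L) ⊆ K ∧ (↑A₂ : Set L) ⊆ K := by
        constructor <;> intro z hz <;> exact hK (by simp [hz])
      exact hA₁ K hs.1 _ (hA₂ K hs.2 y hy)
    | smul c ψ h ih =>
      obtain ⟨A, hA⟩ := ih
      exact ⟨A, fun K hK y hy => K.smul_mem c (hA K hK y hy)⟩
  obtain ⟨A, hA⟩ := key φ hmult
  set s : Finset L := insert x A with hs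
  set K : LieSubalgebra F L := LieSubalgebra.lieSpan F L (↑s : Set L) with hKdef
  have hfin : FiniteDimensional F K := hloc s
  have hxK : x ∈ K := LieSubalgebra.subset_lieSpan (by simp [hs])
  have hAK : (↑A : Set L) ⊆ K := fun z hz =>
    LieSubalgebra.subset_lieSpan (by simp [hs, hz])
  have hφK : ∀ y ∈ K, φ y ∈ K := hA K hAK
  -- powers of φ stabilize K
  have hpowK : ∀ (n : ℕ), ∀ y ∈ K, (φ ^ n) y ∈ K := by
    intro n
    induction n with
    | zero => intro y hy; simpa using hy
    | succ n ih =>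
      intro y hy
      rw [pow_succ, Module.End.mul_apply]
      exact ih _ (hφK y hy)
  have haevalK : ∀ g : Polynomial F, ∀ y ∈ K, (Polynomial.aeval φ g) y ∈ K := by
    intro g
    induction g using Polynomial.induction_on' with
    | add p q hp hq =>
      intro y hy
      rw [map_add]
      exact K.add_mem (hp y hy) (hq y hy)
    | monomial n c =>
      intro y hy
      rw [Polynomial.aeval_monomial]
      simpa [Algebra.algebraMap_eq_smul_one, mul_comm] using
        K.smul_mem c (hpowK n y hy)
  -- the evaluation-at-x map F[X] → K has nontrivial kernel
  let ℓ0 : Polynomial F →ₗ[F] L :=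
    { toFun := fun g => (Polynomial.aeval φ g) x
      map_add' := fun p q => by simp
      map_smul' := fun c p => by simp }
  have hfin' : FiniteDimensional F K.toSubmodule := hfin
  let ℓ : Polynomial F →ₗ[F] K.toSubmodule :=
    LinearMap.codRestrict K.toSubmodule ℓ0 (fun g => haevalK g x hxK)
  have hℓ : ¬ Function.Injective ℓ := by
    intro hinj
    have : Module.Finite F (Polynomial F) := Module.Finite.of_injective ℓ hinj
    exact Polynomial.not_finite this
  rw [Function.not_injective_iff] at hℓ
  obtain ⟨p, q, hpq, hne⟩ := hℓ
  have hf0 : p - q ≠ 0 := sub_ne_zero_of_ne hne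
  have hfx : (Polynomial.aeval φ (p - q)) x = 0 := by
    have h2 := congrArg (Subtype.val) hpq
    simp only [ℓ, ℓ0, LinearMap.codRestrict_apply, LinearMap.coe_mk,
      AddHom.coe_mk] at h2
    rw [map_sub, LinearMap.sub_apply, h2, sub_self]
  set f : Polynomial F := p - q with hf
  -- aeval φ f commutes with all brackets
  have hpowcomm : ∀ (n : ℕ) (a y : L), (φ ^ n) ⁅a, y⁆ = ⁅a, (φ ^ n) y⁆ := by
    intro n
    induction n with
    | zero => intro a y; simp
    | succ n ih =>
      intro a y
      simp only [pow_succ', Module.End.mul_apply]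
      rw [ih, (hcent _ _).1]
  have hcomm : ∀ (g : Polynomial F) (a y : L),
      (Polynomial.aeval φ g) ⁅a, y⁆ = ⁅a, (Polynomial.aeval φ g) y⁆ := by
    intro g a y
    induction g using Polynomial.induction_on' with
    | add p q hp hq => rw [map_add, LinearMap.add_apply, LinearMap.add_apply,
        hp, hq, lie_add]
    | monomial n c =>
      rw [Polynomial.aeval_monomial]
      simp only [Algebra.algebraMap_eq_smul_one, Module.End.mul_apply,
        LinearMap.smul_apply, Module.End.one_apply, LinearMap.map_smul]
      rw [hpowcomm n a y, lie_smul]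
  -- the kernel of aeval φ f is a Lie ideal
  let N : LieIdeal F L :=
    { LinearMap.ker (Polynomial.aeval φ f) with
      lie_mem := by
        intro a y hy
        have hy' : (Polynomial.aeval φ f) y = 0 := hy
        show (Polynomial.aeval φ f) ⁅a, y⁆ = 0
        rw [hcomm, hy', lie_zero] }
  have hxN : x ∈ N := by
    show x ∈ LinearMap.ker (Polynomial.aeval φ f)
    simpa using hfx
  have hN : N = ⊤ := by
    rcases LieAlgebra.IsSimple.eq_bot_or_eq_top N with h | h
    · exfalso; rw [h] at hxN; exact hx (by simpa using hxN)
    · exact h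
  refine ⟨f, hf0, ?_⟩
  ext y
  have hyN : y ∈ N := hN ▸ LieSubmodule.mem_top y
  simpa using (LinearMap.mem_ker.mp hyN)
end

section
/- Let R be a simple, locally finite-dimensional associative algebra over an algebraically closed field F of characteristic zero. Then the center of R intersects the derived Lie subalgebra trivially: Z(R) ∩ [R,R] = (0), where [R,R] is the span of all commutators ab - ba. -/
open Polynomial LinearMap Module Set

/-- `pw z n = z ^ (n+1)` in a possibly non-unital setting. -/
private def pw {M : Type*} [Mul M] (z : M) : ℕ → M
  | 0 => z
  | n + 1 => z * pw z n

private lemma pw_comm {M : Type*} [Semigroup M] (z : M) (hz : ∀ r, z * r = r * z) :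
    ∀ n r, pw z n * r = r * pw z n := by
  intro n
  induction n with
  | zero => exact hz
  | succ n ih =>
      intro r
      show (z * pw z n) * r = r * (z * pw z n)
      rw [mul_assoc, ih r, ← mul_assoc, hz r, mul_assoc]

private lemma pw_add {M : Type*} [Semigroup M] (z : M) (a b : ℕ) :
    pw z a * pw z b = pw z (a + b + 1) := by
  induction a with
  | zero =>
      show z * pw z b = pw z (0 + b + 1)
      simp only [Nat.zero_add]
      rfl
  | succ a ih =>
      show (z * pw z a) * pw z b = pw z (a + 1 + b + 1)
      rw [mul_assoc, ih]
      have : a + 1 + b + 1 = (a + b + 1) + 1 := by omega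
      rw [this]
      rfl

private lemma pw_eq_zero_of_le {M : Type*} [MulZeroClass M] (z : M) {k m : ℕ}
    (hk : pw z k = 0) (h : k ≤ m) : pw z m = 0 := by
  induction m with
  | zero => simpa [Nat.le_zero.mp h] using hk
  | succ m ih =>
      rcases Nat.lt_or_ge k (m + 1) with h' | h'
      · have := ih (by omega)
        show z * pw z m = 0
        rw [this, mul_zero]
      · have : k = m + 1 := by omega
        rwa [← this]

private lemma vandermonde_aux {F : Type*} [Field F]
    (s : Finset F) (c : F → F)
    (h : ∀ n : ℕ, 1 ≤ n → ∑ μ ∈ s, c μ * μ ^ n = 0)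
    {μ₀ : F} (hμ₀ : μ₀ ∈ s) (hne : μ₀ ≠ 0) : c μ₀ = 0 := by
  classical
  set p : F[X] := X * ∏ ν ∈ s.erase μ₀, (X - C ν) with hp
  have hp0 : p.coeff 0 = 0 := by
    simp [hp, coeff_zero_eq_eval_zero]
  have key : ∑ μ ∈ s, c μ * p.eval μ = 0 := by
    have h1 : ∀ μ ∈ s, c μ * p.eval μ
        = ∑ i ∈ Finset.range (p.natDegree + 1), p.coeff i * (c μ * μ ^ i) := by
      intro μ _
      rw [eval_eq_sum_range, Finset.mul_sum]
      exact Finset.sum_congr rfl fun i _ => by ring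
    rw [Finset.sum_congr rfl h1, Finset.sum_comm]
    refine Finset.sum_eq_zero fun i _ => ?_
    rcases Nat.eq_zero_or_pos i with rfl | hi
    · simp [hp0]
    · rw [← Finset.mul_sum, h i hi, mul_zero]
  have hzero : ∀ ν ∈ s, ν ≠ μ₀ → c ν * p.eval ν = 0 := by
    intro ν hν hνne
    have : p.eval ν = 0 := by
      have : (X - C ν).eval ν = 0 := by simp
      simp only [hp, eval_mul, eval_prod]
      rw [Finset.prod_eq_zero (Finset.mem_erase.mpr ⟨hνne, hν⟩) this, mul_zero]
    rw [this, mul_zero]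
  have hsingle : ∑ μ ∈ s, c μ * p.eval μ = c μ₀ * p.eval μ₀ :=
    Finset.sum_eq_single_of_mem μ₀ hμ₀ hzero
  have hpne : p.eval μ₀ ≠ 0 := by
    simp only [hp, eval_mul, eval_prod, eval_X]
    refine mul_ne_zero hne (Finset.prod_ne_zero_iff.mpr fun ν hν => ?_)
    have := (Finset.mem_erase.mp hν).1
    simp only [eval_sub, eval_X, eval_C, sub_ne_zero]
    exact fun hc => this hc.symm
  rw [key] at hsingle
  exact (mul_eq_zero.mp hsingle.symm).resolve_right hpne

private lemma isNilpotent_of_trace_pow {F V : Type*} [Field F] [IsAlgClosed F] [CharZero F]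
    [AddCommGroup V] [Module F V] [FiniteDimensional F V]
    (f : Module.End F V) (h : ∀ n : ℕ, 1 ≤ n → trace F V (f ^ n) = 0) :
    IsNilpotent f := by
  classical
  have hsup : ⨆ μ, f.maxGenEigenspace μ = ⊤ := Module.End.iSup_maxGenEigenspace_eq_top f
  have hind := f.independent_maxGenEigenspace
  have h_fin : {μ | f.maxGenEigenspace μ ≠ ⊥}.Finite :=
    WellFoundedGT.finite_ne_bot_of_iSupIndep hind
  have hds := DirectSum.isInternal_submodule_of_iSupIndep_of_iSup_eq_top hind hsup
  have hmp : ∀ μ : F, MapsTo f (f.maxGenEigenspace μ) (f.maxGenEigenspace μ) :=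
    fun μ => f.mapsTo_maxGenEigenspace_of_comm rfl μ
  -- the restriction of f to a generalized eigenspace
  have htr : ∀ (μ : F) (n : ℕ),
      trace F _ ((f.restrict (hmp μ)) ^ n)
        = μ ^ n * (finrank F (f.maxGenEigenspace μ) : F) := by
    intro μ n
    induction n with
    | zero => simp [trace_one]
    | succ n ih =>
        have hnil : IsNilpotent (f.restrict (hmp μ) - algebraMap F _ μ) := by
          have := f.isNilpotent_restrict_maxGenEigenspace_sub_algebraMap μ
          have heq : f.restrict (hmp μ) - algebraMap F _ μ
              = (f - algebraMap F (Module.End F V) μ).restrict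
                (f.mapsTo_maxGenEigenspace_of_comm
                  (Algebra.mul_sub_algebraMap_commutes f μ) μ) := by
            ext x
            simp [LinearMap.restrict_apply, algebraMap_end_apply, Module.algebraMap_end_apply]
            rfl
          rw [heq]
          exact this
        have hcomm : Commute ((f.restrict (hmp μ)) ^ n) (f.restrict (hmp μ)) :=
          (Commute.refl _).pow_left n
        rw [pow_succ, Module.End.mul_eq_comp,
          trace_comp_eq_mul_of_commute_of_isNilpotent μ hcomm hnil, ih]
        ring
  -- all nonzero eigenvalues give zero-dimensional generalized eigenspaces
  have hVzero : ∀ μ : F, μ ≠ 0 → f.maxGenEigenspace μ = ⊥ := by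
    intro μ hμ
    by_contra hbot
    have hμmem : μ ∈ h_fin.toFinset := h_fin.mem_toFinset.mpr hbot
    have hsums : ∀ n : ℕ, 1 ≤ n →
        ∑ ν ∈ h_fin.toFinset,
          (finrank F (f.maxGenEigenspace ν) : F) * ν ^ n = 0 := by
      intro n hn
      have hmpn : ∀ ν : F, MapsTo (f ^ n) (f.maxGenEigenspace ν) (f.maxGenEigenspace ν) :=
        fun ν => Module.End.mapsTo_maxGenEigenspace_of_comm ((Commute.refl f).pow_right n) ν
      have hres : ∀ ν : F, (f ^ n).restrict (hmpn ν) = (f.restrict (hmp ν)) ^ n :=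
        fun ν => (Module.End.pow_restrict n (fun x hx => hmp ν hx)).symm
      have hT := trace_eq_sum_trace_restrict' hds h_fin hmpn
      rw [h n hn] at hT
      calc ∑ ν ∈ h_fin.toFinset, (finrank F (f.maxGenEigenspace ν) : F) * ν ^ n
          = ∑ ν ∈ h_fin.toFinset, trace F _ ((f ^ n).restrict (hmpn ν)) :=
            Finset.sum_congr rfl fun ν _ => by rw [hres, htr]; ring
        _ = 0 := hT.symm
    have := vandermonde_aux h_fin.toFinset
      (fun ν => (finrank F (f.maxGenEigenspace ν) : F))
      (by
        intro n hn
        have := hsums n hn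
        simpa [mul_comm] using this) hμmem hμ
    have hnt : Nontrivial (f.maxGenEigenspace μ) := Submodule.nontrivial_iff_ne_bot.mpr hbot
    have hpos : 0 < finrank F (f.maxGenEigenspace μ) := Module.finrank_pos_iff.mpr hnt
    exact (Nat.cast_ne_zero.mpr hpos.ne') this
  -- hence the zero generalized eigenspace is everything
  have htop : f.maxGenEigenspace 0 = ⊤ := by
    rw [← hsup]
    refine le_antisymm (le_iSup _ 0) (iSup_le fun μ => ?_)
    rcases eq_or_ne μ 0 with rfl | hμ
    · exact le_rfl
    · rw [hVzero μ hμ]; exact bot_le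
  rw [LinearMap.isNilpotent_iff_charpoly, LinearMap.charpoly_eq_X_pow_iff]
  intro m
  have : m ∈ f.maxGenEigenspace 0 := htop ▸ Submodule.mem_top
  rw [Module.End.mem_maxGenEigenspace] at this
  obtain ⟨k, hk⟩ := this
  exact ⟨k, by simpa using hk⟩

private lemma aux_alg {F A : Type*} [Field F] [IsAlgClosed F] [CharZero F]
    [NonUnitalRing A] [Module F A] [IsScalarTower F A A] [SMulCommClass F A A]
    [FiniteDimensional F A]
    (z : A) (hz : ∀ r : A, z * r = r * z)
    (hzc : z ∈ Submodule.span F {x : A | ∃ a b : A, x = a * b - b * a}) :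
    ∃ n : ℕ, pw z n = 0 := by
  set S := {x : A | ∃ a b : A, x = a * b - b * a} with hS
  -- the span of commutators is invariant under left multiplication by z
  have hinv : ∀ x ∈ Submodule.span F S, z * x ∈ Submodule.span F S := by
    intro x hx
    have hle : Submodule.span F S ≤ (Submodule.span F S).comap (mulLeft F z) := by
      rw [Submodule.span_le]
      rintro _ ⟨a, b, rfl⟩
      simp only [SetLike.mem_coe, Submodule.mem_comap, mulLeft_apply]
      have heq : z * (a * b - b * a) = (z * a) * b - b * (z * a) := by
        rw [mul_sub, ← mul_assoc]
        congr 1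
        rw [← mul_assoc, hz b, mul_assoc]
      rw [heq]
      exact Submodule.subset_span ⟨z * a, b, rfl⟩
    exact hle hx
  have hpw : ∀ n : ℕ, pw z n ∈ Submodule.span F S := by
    intro n
    induction n with
    | zero => exact hzc
    | succ n ih => exact hinv _ ih
  -- trace of left multiplication vanishes on the span of commutators
  set T : A →ₗ[F] F := (trace F A).comp (LinearMap.mul F A) with hT
  have htr : ∀ x ∈ Submodule.span F S, T x = 0 := by
    intro x hx
    have hle : Submodule.span F S ≤ LinearMap.ker T := by
      rw [Submodule.span_le]
      rintro _ ⟨a, b, rfl⟩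
      simp only [SetLike.mem_coe, LinearMap.mem_ker, hT, LinearMap.comp_apply, map_sub]
      have h1 : (LinearMap.mul F A) (a * b) = (mulLeft F a).comp (mulLeft F b) := by
        ext c; simp [LinearMap.mul_apply', mul_assoc]
      have h2 : (LinearMap.mul F A) (b * a) = (mulLeft F b).comp (mulLeft F a) := by
        ext c; simp [LinearMap.mul_apply', mul_assoc]
      rw [h1, h2, ← Module.End.mul_eq_comp, ← Module.End.mul_eq_comp, trace_mul_comm, sub_self]
    exact hle hx
  -- powers of `mulLeft z`
  have hML : ∀ n : ℕ, (mulLeft F z) ^ (n + 1) = mulLeft F (pw z n) := by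
    intro n
    induction n with
    | zero => rw [pow_one]; rfl
    | succ n ih =>
        rw [pow_succ', ih]
        show mulLeft F z * mulLeft F (pw z n) = mulLeft F (z * pw z n)
        rw [mulLeft_mul, Module.End.mul_eq_comp]
  have htrpow : ∀ n : ℕ, 1 ≤ n → trace F A ((mulLeft F z) ^ n) = 0 := by
    intro n hn
    obtain ⟨m, rfl⟩ : ∃ m, n = m + 1 := ⟨n - 1, by omega⟩
    rw [hML m]
    have : T (pw z m) = 0 := htr _ (hpw m)
    rw [show mulLeft F (pw z m) = LinearMap.mul F A (pw z m) from by ext; simp]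
    simpa [hT, LinearMap.comp_apply, LinearMap.mul_apply'] using this
  obtain ⟨k, hk⟩ := isNilpotent_of_trace_pow (mulLeft F z) htrpow
  rcases Nat.eq_zero_or_pos k with rfl | hkpos
  · refine ⟨0, ?_⟩
    have : z = 0 := by
      have h1 : ((mulLeft F z) ^ 0) = (1 : Module.End F A) := pow_zero _
      rw [hk] at h1
      have := congrArg (fun g : Module.End F A => g z) h1
      simpa using this.symm
    simpa [pw] using this
  · obtain ⟨m, rfl⟩ : ∃ m, k = m + 1 := ⟨k - 1, by omega⟩
    refine ⟨m + 1, ?_⟩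
    rw [hML m] at hk
    have h1 : pw z m * z = 0 := by
      have := congrArg (fun g : Module.End F A => g z) hk
      simpa using this
    rw [pw_comm z hz m z] at h1
    exact h1

private lemma pw_coe {F R : Type*} [CommSemiring F] [NonUnitalNonAssocSemiring R]
    [Module F R] [IsScalarTower F R R] [SMulCommClass F R R]
    (A : NonUnitalSubalgebra F R) (x : A) :
    ∀ n : ℕ, ((pw x n : A) : R) = pw (x : R) n := by
  intro n
  induction n with
  | zero => rfl
  | succ n ih =>
      show ((x * pw x n : A) : R) = (x : R) * pw (x : R) n
      rw [← ih]
      rfl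

/-- Let `R` be a simple, locally finite-dimensional associative algebra over an
algebraically closed field `F` of characteristic zero. Then the center of `R` meets the
span of all commutators trivially: `Z(R) ∩ [R,R] = 0`. -/
theorem stmt5 {F R : Type*} [Field F] [IsAlgClosed F] [CharZero F]
    [NonUnitalRing R] [Module F R] [IsScalarTower F R R] [SMulCommClass F R R]
    (hsimple : (∃ a b : R, a * b ≠ 0) ∧ ∀ I : TwoSidedIdeal R, I = ⊥ ∨ I = ⊤)
    (hloc : ∀ s : Finset R,
      FiniteDimensional F (NonUnitalAlgebra.adjoin F (s : Set R)))
    (z : R) (hz : ∀ r : R, z * r = r * z)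
    (hzc : z ∈ Submodule.span F {x : R | ∃ a b : R, x = a * b - b * a}) :
    z = 0 := by
  classical
  -- Step 1: a finite set of commutators spanning z
  obtain ⟨t, hts, hzt⟩ := Submodule.mem_span_finite_of_mem_span hzc
  have hwit : ∀ x : {x // x ∈ t}, ∃ p : R × R, (x : R) = p.1 * p.2 - p.2 * p.1 := by
    rintro ⟨x, hx⟩
    obtain ⟨a, b, hab⟩ := hts hx
    exact ⟨(a, b), hab⟩
  choose p hp using hwit
  -- Step 2: the finite-dimensional subalgebra
  set s : Finset R := insert z (t.attach.image (fun x => (p x).1) ∪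
      t.attach.image (fun x => (p x).2)) with hs
  set A : NonUnitalSubalgebra F R := NonUnitalAlgebra.adjoin F (s : Set R) with hA
  haveI : FiniteDimensional F A := hloc s
  have hzA : z ∈ A := NonUnitalAlgebra.subset_adjoin F (by simp [hs])
  have haA : ∀ x : {x // x ∈ t}, (p x).1 ∈ A := fun x =>
    NonUnitalAlgebra.subset_adjoin F (by
      simp only [hs, Finset.coe_insert, Set.mem_insert_iff, Finset.coe_union,
        Set.mem_union, Finset.coe_image, Set.mem_image]
      exact Or.inr (Or.inl ⟨x, by simp⟩))
  have hbA : ∀ x : {x // x ∈ t}, (p x).2 ∈ A := fun x =>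
    NonUnitalAlgebra.subset_adjoin F (by
      simp only [hs, Finset.coe_insert, Set.mem_insert_iff, Finset.coe_union,
        Set.mem_union, Finset.coe_image, Set.mem_image]
      exact Or.inr (Or.inr ⟨x, by simp⟩))
  have htA : ∀ x ∈ t, x ∈ A := by
    intro x hx
    have hx' : x = (p ⟨x, hx⟩).1 * (p ⟨x, hx⟩).2 - (p ⟨x, hx⟩).2 * (p ⟨x, hx⟩).1 := hp ⟨x, hx⟩
    rw [hx']
    exact sub_mem (mul_mem (haA ⟨x, hx⟩) (hbA ⟨x, hx⟩))
      (mul_mem (hbA ⟨x, hx⟩) (haA ⟨x, hx⟩))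
  -- Step 3: transfer everything to A
  set zA : A := ⟨z, hzA⟩ with hzAdef
  have hzAc : ∀ r : A, zA * r = r * zA := by
    rintro ⟨r, hr⟩
    ext
    exact hz r
  set L : A →ₗ[F] R :=
    { toFun := fun x => (x : R)
      map_add' := fun x y => rfl
      map_smul' := fun c x => rfl } with hL
  set C : Set A := {x : A | ∃ a b : A, x = a * b - b * a} with hC
  have hzAspan : zA ∈ Submodule.span F C := by
    have hsub : (t : Set R) ⊆ L '' C := by
      intro x hx
      refine ⟨⟨x, htA x hx⟩, ⟨⟨(p ⟨x, hx⟩).1, haA _⟩, ⟨(p ⟨x, hx⟩).2, hbA _⟩, ?_⟩, rfl⟩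
      ext
      exact hp ⟨x, hx⟩
    have hzmem : z ∈ Submodule.span F (L '' C) :=
      Submodule.span_mono hsub hzt
    rw [Submodule.span_image] at hzmem
    obtain ⟨y, hy, hyz⟩ := hzmem
    have : y = zA := by
      ext
      exact hyz
    rwa [← this]
  -- Step 4: z is nilpotent
  obtain ⟨n, hn⟩ := aux_alg zA hzAc hzAspan
  have hnR : pw z n = 0 := by
    have h2 : ((pw zA n : A) : R) = ((0 : A) : R) := by rw [hn]
    rw [pw_coe] at h2
    simpa using h2
  -- Step 5: conclude z = 0 by simplicity
  by_contra hz0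
  have hex : ∃ m, pw z m = 0 := ⟨n, hnR⟩
  set k := Nat.find hex with hk
  have hk0 : pw z k = 0 := Nat.find_spec hex
  rcases Nat.eq_zero_or_pos k with hkz | hkpos
  · exact hz0 (by rw [hkz] at hk0; exact hk0)
  obtain ⟨j, hj⟩ : ∃ j, k = j + 1 := ⟨k - 1, by omega⟩
  set w : R := pw z j with hw
  have hwne : w ≠ 0 := Nat.find_min hex (by omega)
  have hwc : ∀ r : R, w * r = r * w := pw_comm z hz j
  have hww : w * w = 0 := by
    rw [hw, pw_add]
    exact pw_eq_zero_of_le z hk0 (by omega)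
  -- first ideal: the annihilator of w
  set I1 : TwoSidedIdeal R := TwoSidedIdeal.mk' {r : R | w * r = 0}
    (by simp)
    (fun {x y} hx hy => by simp only [Set.mem_setOf_eq] at *; rw [mul_add, hx, hy, add_zero])
    (fun {x} hx => by simp only [Set.mem_setOf_eq] at *; rw [mul_neg, hx, neg_zero])
    (fun {x y} hy => by
      simp only [Set.mem_setOf_eq] at *
      rw [← mul_assoc, hwc x, mul_assoc, hy, mul_zero])
    (fun {x y} hx => by
      simp only [Set.mem_setOf_eq] at *
      rw [← mul_assoc, hx, zero_mul]) with hI1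
  have hwI1 : w ∈ I1 := by
    rw [hI1, TwoSidedIdeal.mem_mk']
    exact hww
  have hI1top : I1 = ⊤ := by
    rcases hsimple.2 I1 with hbot | htop
    · exfalso
      rw [hbot, TwoSidedIdeal.mem_bot] at hwI1
      exact hwne hwI1
    · exact htop
  have hwall : ∀ r : R, w * r = 0 := by
    intro r
    have : r ∈ I1 := by rw [hI1top]; exact TwoSidedIdeal.mem_top R
    rwa [hI1, TwoSidedIdeal.mem_mk'] at this
  -- second ideal: total left annihilators
  set I2 : TwoSidedIdeal R := TwoSidedIdeal.mk' {x : R | ∀ r : R, x * r = 0}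
    (by simp)
    (fun {x y} hx hy => by
      intro r
      rw [add_mul, hx r, hy r, add_zero])
    (fun {x} hx => by
      intro r
      rw [neg_mul, hx r, neg_zero])
    (fun {x y} hy => by
      intro r
      rw [mul_assoc, hy r, mul_zero])
    (fun {x y} hx => by
      intro r
      rw [mul_assoc, hx (y * r)]) with hI2
  have hwI2 : w ∈ I2 := by
    rw [hI2, TwoSidedIdeal.mem_mk']
    exact hwall
  have hI2top : I2 = ⊤ := by
    rcases hsimple.2 I2 with hbot | htop
    · exfalso
      rw [hbot, TwoSidedIdeal.mem_bot] at hwI2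
      exact hwne hwI2
    · exact htop
  obtain ⟨a, b, hab⟩ := hsimple.1
  have : a ∈ I2 := by rw [hI2top]; exact TwoSidedIdeal.mem_top R
  rw [hI2, TwoSidedIdeal.mem_mk'] at this
  exact hab (this b)
end

section
/- Let A be a simple, locally finite-dimensional associative algebra over a field. For each finite subset α ⊆ A, let A_α be the (finite-dimensional) subalgebra generated by α, and N_α its Jacobson radical. If f is a multilinear polynomial such that f vanishes on A_α/N_α for every finite subset α, then f vanishes on A. -/
/-- Evaluation of the multilinear (noncommutative) polynomial
`f(x₁,…,xₘ) = ∑_{σ ∈ Sₘ} c_σ x_{σ(1)} ⋯ x_{σ(m)}` at a tuple `v`. -/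
def evalMultilinear {F A : Type*} [Field F] [Ring A] [Algebra F A] {m : ℕ}
    (c : Equiv.Perm (Fin m) → F) (v : Fin m → A) : A :=
  ∑ σ : Equiv.Perm (Fin m), c σ • (List.ofFn fun i => v (σ i)).prod

/-- A two-sided ideal `N` is nilpotent if all products of some fixed length `d > 0` of
elements of `N` vanish. -/
def IsNilpotentTwoSidedIdeal {A : Type*} [Ring A] (N : TwoSidedIdeal A) : Prop :=
  ∃ d : ℕ, 0 < d ∧ ∀ l : List A, l.length = d → (∀ x ∈ l, x ∈ N) → l.prod = 0

open scoped Classical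

section Aux

variable {A : Type*} [Ring A]

/-- Extraction: from a list with at least `k ≥ 1` entries in `N`, the product equals the
product of a list of exactly `k` elements of `N`. -/
lemma aux_extract (N : TwoSidedIdeal A) :
    ∀ (l : List A) (k : ℕ), 1 ≤ k → k ≤ l.countP (fun x => decide (x ∈ N)) →
      ∃ l' : List A, l'.length = k ∧ (∀ x ∈ l', x ∈ N) ∧ l.prod = l'.prod := by
  intro l
  induction l with
  | nil => intro k hk hc; rw [List.countP_nil] at hc; omega
  | cons x t ih =>
    intro k hk hc
    rw [List.countP_cons] at hc
    by_cases hx : x ∈ N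
    · simp [hx] at hc
      rcases Nat.lt_or_ge k 2 with hk2 | hk2
      · have hk1 : k = 1 := by omega
        subst hk1
        exact ⟨[x * t.prod], rfl, by
          intro y hy
          simp at hy
          subst hy
          exact N.mul_mem_right _ _ hx, by simp⟩
      · obtain ⟨l', hlen, hmem, hprod⟩ := ih (k - 1) (by omega) (by omega)
        refine ⟨x :: l', by simp [hlen]; omega, ?_, by simp [hprod]⟩
        intro y hy
        rcases List.mem_cons.mp hy with rfl | hy
        · exact hx
        · exact hmem y hy
    · simp [hx] at hc
      obtain ⟨l', hlen, hmem, hprod⟩ := ih k hk hc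
      cases l' with
      | nil => simp at hlen; omega
      | cons n r =>
        refine ⟨(x * n) :: r, by simpa using hlen, ?_, ?_⟩
        · intro y hy
          rcases List.mem_cons.mp hy with rfl | hy
          · exact N.mul_mem_left _ _ (hmem n (by simp))
          · exact hmem y (by simp [hy])
        · simp [hprod, mul_assoc]

lemma aux_prod_zero (N : TwoSidedIdeal A) {d : ℕ} (hd : 0 < d)
    (hnil : ∀ l : List A, l.length = d → (∀ x ∈ l, x ∈ N) → l.prod = 0)
    (l : List A) (hc : d ≤ l.countP (fun x => decide (x ∈ N))) : l.prod = 0 := by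
  obtain ⟨l', hlen, hmem, hprod⟩ := aux_extract N l d hd hc
  rw [hprod]
  exact hnil l' hlen hmem

/-- The sum of two two-sided ideals, as a two-sided ideal. -/
def sumIdeal (N N' : TwoSidedIdeal A) : TwoSidedIdeal A :=
  TwoSidedIdeal.mk' {x | ∃ a ∈ N, ∃ b ∈ N', x = a + b}
    ⟨0, N.zero_mem, 0, N'.zero_mem, by simp⟩
    (by rintro x y ⟨a, ha, b, hb, rfl⟩ ⟨a', ha', b', hb', rfl⟩
        exact ⟨a + a', N.add_mem ha ha', b + b', N'.add_mem hb hb', by rw [add_add_add_comm]⟩)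
    (by rintro x ⟨a, ha, b, hb, rfl⟩
        exact ⟨-a, N.neg_mem ha, -b, N'.neg_mem hb, by rw [neg_add]⟩)
    (by rintro x y ⟨a, ha, b, hb, rfl⟩
        exact ⟨x * a, N.mul_mem_left _ _ ha, x * b, N'.mul_mem_left _ _ hb, by rw [mul_add]⟩)
    (by rintro x y ⟨a, ha, b, hb, rfl⟩
        exact ⟨a * y, N.mul_mem_right _ _ ha, b * y, N'.mul_mem_right _ _ hb, by rw [add_mul]⟩)

lemma mem_sumIdeal {N N' : TwoSidedIdeal A} {x : A} :
    x ∈ sumIdeal N N' ↔ ∃ a ∈ N, ∃ b ∈ N', x = a + b := by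
  simp [sumIdeal, TwoSidedIdeal.mem_mk']

lemma mul_multiset_sum (a : A) (s : Multiset A) :
    (s.map (fun y => a * y)).sum = a * s.sum := by
  have := Multiset.sum_map_mul_left (s := s) (a := a) (f := id)
  simpa using this

lemma aux_expand (N N' : TwoSidedIdeal A) :
    ∀ l : List A, (∀ x ∈ l, ∃ a ∈ N, ∃ b ∈ N', x = a + b) →
      ∃ s : Multiset A, l.prod = s.sum ∧ ∀ y ∈ s, ∃ t : List A,
        t.length = l.length ∧
        t.length ≤ t.countP (fun x => decide (x ∈ N)) + t.countP (fun x => decide (x ∈ N')) ∧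
        y = t.prod := by
  intro l
  induction l with
  | nil =>
    intro _
    exact ⟨{1}, by simp, by
      intro y hy
      simp at hy
      exact ⟨[], rfl, by simp, by simp [hy]⟩⟩
  | cons x t ih =>
    intro hmem
    obtain ⟨a, ha, b, hb, rfl⟩ := hmem x (by simp)
    obtain ⟨s, hsum, hs⟩ := ih (fun y hy => hmem y (by simp [hy]))
    refine ⟨s.map (fun y => a * y) + s.map (fun y => b * y), ?_, ?_⟩
    · rw [List.prod_cons, hsum, Multiset.sum_add, add_mul]
      congr 1
      · exact (mul_multiset_sum a s).symm
      · exact (mul_multiset_sum b s).symm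
    · intro y hy
      rcases Multiset.mem_add.mp hy with hy | hy
      · obtain ⟨y0, hy0, rfl⟩ := Multiset.mem_map.mp hy
        obtain ⟨t0, hlen, hcnt, rfl⟩ := hs y0 hy0
        refine ⟨a :: t0, by simp [hlen], ?_, by simp⟩
        rw [List.countP_cons, List.countP_cons]
        simp [ha]
        omega
      · obtain ⟨y0, hy0, rfl⟩ := Multiset.mem_map.mp hy
        obtain ⟨t0, hlen, hcnt, rfl⟩ := hs y0 hy0
        refine ⟨b :: t0, by simp [hlen], ?_, by simp⟩
        rw [List.countP_cons, List.countP_cons]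
        simp [hb]
        omega

lemma sumIdeal_nilpotent {N N' : TwoSidedIdeal A}
    (hN : IsNilpotentTwoSidedIdeal N) (hN' : IsNilpotentTwoSidedIdeal N') :
    IsNilpotentTwoSidedIdeal (sumIdeal N N') := by
  obtain ⟨d, hd, hnil⟩ := hN
  obtain ⟨d', hd', hnil'⟩ := hN'
  refine ⟨d + d', by omega, ?_⟩
  intro l hlen hmem
  obtain ⟨s, hsum, hs⟩ := aux_expand N N' l (fun x hx => mem_sumIdeal.mp (hmem x hx))
  rw [hsum]
  refine Multiset.sum_eq_zero ?_
  intro y hy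
  obtain ⟨t, htlen, hcnt, rfl⟩ := hs y hy
  rw [hlen] at htlen
  rcases Nat.lt_or_ge (t.countP (fun x => decide (x ∈ N))) d with h1 | h1
  · exact aux_prod_zero N' hd' hnil' t (by omega)
  · exact aux_prod_zero N hd hnil t h1

end Aux

section FinDim

variable {F B : Type*} [Field F] [Ring B] [Algebra F B]

/-- A two-sided ideal of an `F`-algebra, viewed as an `F`-submodule. -/
def tsiSubmodule (I : TwoSidedIdeal B) : Submodule F B where
  carrier := I
  add_mem' := I.add_mem
  zero_mem' := I.zero_mem
  smul_mem' := fun c x hx => by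
    rw [Algebra.smul_def]
    exact I.mul_mem_left _ _ hx

lemma mem_tsiSubmodule {I : TwoSidedIdeal B} {x : B} :
    x ∈ (tsiSubmodule (F := F) I) ↔ x ∈ I := Iff.rfl

lemma bot_nilpotent : IsNilpotentTwoSidedIdeal (⊥ : TwoSidedIdeal B) := by
  refine ⟨1, one_pos, ?_⟩
  intro l hlen hmem
  obtain ⟨x, rfl⟩ := List.length_eq_one_iff.mp hlen
  simpa using (TwoSidedIdeal.mem_bot B).mp (hmem x (by simp))

/-- In a finite-dimensional algebra there is a largest nilpotent two-sided ideal. -/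
lemma exists_max_nilpotent [FiniteDimensional F B] :
    ∃ N : TwoSidedIdeal B, IsNilpotentTwoSidedIdeal N ∧
      ∀ N' : TwoSidedIdeal B, IsNilpotentTwoSidedIdeal N' → N' ≤ N := by
  set T : Set ℕ := {n | ∃ I : TwoSidedIdeal B, IsNilpotentTwoSidedIdeal I ∧
    Module.finrank F (tsiSubmodule (F := F) I) = n} with hT
  have hne : T.Nonempty := ⟨_, ⊥, bot_nilpotent, rfl⟩
  have hbdd : BddAbove T := by
    refine ⟨Module.finrank F B, ?_⟩
    rintro n ⟨I, -, rfl⟩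
    exact Submodule.finrank_le _
  obtain ⟨N, hNnil, hNrank⟩ := Nat.sSup_mem hne hbdd
  refine ⟨N, hNnil, ?_⟩
  intro N' hN'
  have hsum := sumIdeal_nilpotent hNnil hN'
  have hle : tsiSubmodule (F := F) N ≤ tsiSubmodule (F := F) (sumIdeal N N') := by
    intro x hx
    exact mem_sumIdeal.mpr ⟨x, hx, 0, N'.zero_mem, by simp⟩
  have hrank : Module.finrank F (tsiSubmodule (F := F) (sumIdeal N N')) ≤ sSup T :=
    le_csSup hbdd ⟨_, hsum, rfl⟩
  have heq : tsiSubmodule (F := F) N = tsiSubmodule (F := F) (sumIdeal N N') :=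
    Submodule.eq_of_le_of_finrank_le hle (by rw [hNrank]; exact hrank)
  intro x hx
  have hx' : x ∈ tsiSubmodule (F := F) (sumIdeal N N') :=
    mem_sumIdeal.mpr ⟨0, N.zero_mem, x, hx, by simp⟩
  rw [← heq] at hx'
  exact hx'

end FinDim

/-- Naturality of `evalMultilinear` under algebra homomorphisms. -/
lemma evalMultilinear_map {F A B : Type*} [Field F] [Ring A] [Algebra F A]
    [Ring B] [Algebra F B] (φ : A →ₐ[F] B) {m : ℕ}
    (c : Equiv.Perm (Fin m) → F) (v : Fin m → A) :
    φ (evalMultilinear c v) = evalMultilinear c (fun i => φ (v i)) := by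
  unfold evalMultilinear
  rw [map_sum]
  refine Finset.sum_congr rfl ?_
  intro σ _
  rw [map_smul, map_list_prod, List.map_ofFn]
  rfl

/-- Every element of the span of `{z}` is a finite sum `∑ aᵢ * z * bᵢ`. -/
lemma mem_span_singleton_rep {A : Type*} [Ring A] {z x : A}
    (hx : x ∈ TwoSidedIdeal.span {z}) :
    ∃ (n : ℕ) (a b : Fin n → A), x = ∑ i, a i * z * b i := by
  rw [TwoSidedIdeal.mem_span_iff_mem_addSubgroup_closure] at hx
  induction hx using AddSubgroup.closure_induction with
  | mem y hy =>
    obtain ⟨w, ⟨p, -, q, hq, rfl⟩, r, -, rfl⟩ := hy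
    rw [Set.mem_singleton_iff] at hq
    subst hq
    exact ⟨1, fun _ => p, fun _ => r, by simp⟩
  | zero => exact ⟨0, Fin.elim0, Fin.elim0, by simp⟩
  | add y w _ _ ihy ihw =>
    obtain ⟨n, a, b, rfl⟩ := ihy
    obtain ⟨n', a', b', rfl⟩ := ihw
    refine ⟨n + n', Fin.append a a', Fin.append b b', ?_⟩
    rw [Fin.sum_univ_add]
    simp [Fin.append_left, Fin.append_right]
  | neg y _ ihy =>
    obtain ⟨n, a, b, rfl⟩ := ihy
    exact ⟨n, fun i => -(a i), b, by simp [Finset.sum_neg_distrib]⟩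

/-- Let `A` be a simple, locally finite-dimensional associative algebra over a field.
For a finite subset `α ⊆ A` let `A_α` be the subalgebra it generates and `N_α` its radical
(the largest nilpotent two-sided ideal). If a multilinear polynomial `f` vanishes on
`A_α / N_α` for every finite `α`, then `f` vanishes on `A`. -/
theorem stmt6 {F A : Type*} [Field F] [Ring A] [Algebra F A] [IsSimpleRing A]
    (hloc : ∀ α : Finset A, FiniteDimensional F (Algebra.adjoin F (α : Set A)))
    {m : ℕ} (c : Equiv.Perm (Fin m) → F)
    (hvanish : ∀ α : Finset A,
      ∀ N : TwoSidedIdeal (Algebra.adjoin F (α : Set A)),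
        IsNilpotentTwoSidedIdeal N →
        (∀ N' : TwoSidedIdeal (Algebra.adjoin F (α : Set A)),
          IsNilpotentTwoSidedIdeal N' → N' ≤ N) →
        ∀ v : Fin m → Algebra.adjoin F (α : Set A), evalMultilinear c v ∈ N) :
    ∀ v : Fin m → A, evalMultilinear c v = 0 := by
  intro v
  by_contra hz
  set z := evalMultilinear c v with hzdef
  -- since A is simple, the span of z is everything
  have hspan : TwoSidedIdeal.span {z} = ⊤ := by
    rcases IsSimpleRing.simple.eq_bot_or_eq_top (TwoSidedIdeal.span {z}) with h | h
    · exfalso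
      exact hz ((TwoSidedIdeal.mem_bot A).mp (h ▸ TwoSidedIdeal.subset_span (Set.mem_singleton z)))
    · exact h
  have h1 : (1 : A) ∈ TwoSidedIdeal.span {z} := by rw [hspan]; trivial
  obtain ⟨n, a, b, hab⟩ := mem_span_singleton_rep h1
  -- the finite set generating our subalgebra
  set α : Finset A :=
    (Finset.image v Finset.univ ∪ Finset.image a Finset.univ ∪ Finset.image b Finset.univ)
    with hα
  have hmemα : ∀ x ∈ α, x ∈ Algebra.adjoin F (α : Set A) :=
    fun x hx => Algebra.subset_adjoin (by exact_mod_cast hx)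
  have hv : ∀ i, v i ∈ Algebra.adjoin F (α : Set A) := fun i =>
    hmemα _ (by simp [hα])
  have ha : ∀ i, a i ∈ Algebra.adjoin F (α : Set A) := fun i =>
    hmemα _ (by simp [hα])
  have hb : ∀ i, b i ∈ Algebra.adjoin F (α : Set A) := fun i =>
    hmemα _ (by simp [hα])
  set B := Algebra.adjoin F (α : Set A) with hB
  haveI : FiniteDimensional F B := hloc α
  obtain ⟨N, hNnil, hNmax⟩ := exists_max_nilpotent (F := F) (B := B)
  set v' : Fin m → B := fun i => ⟨v i, hv i⟩ with hv'
  have hmem : evalMultilinear c v' ∈ N := hvanish α N hNnil hNmax v'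
  -- the value downstairs maps to z
  have hval : ((evalMultilinear c v' : B) : A) = z := by
    rw [hzdef]
    have h2 : (fun i => (B.val) (v' i)) = v := rfl
    rw [show ((evalMultilinear c v' : B) : A) = B.val (evalMultilinear c v') from rfl,
      evalMultilinear_map, h2]
  -- the element w = ∑ a' i * f(v') * b' i lies in N and equals 1
  set w : B := ∑ i, (⟨a i, ha i⟩ : B) * evalMultilinear c v' * ⟨b i, hb i⟩ with hw
  have hwN : w ∈ N := by
    refine N.finsetSum_mem _ _ ?_
    intro i _
    exact N.mul_mem_right _ _ (N.mul_mem_left _ _ hmem)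
  have hw1 : w = (1 : B) := by
    apply Subtype.ext
    push_cast [hw]
    rw [hval, ← hab]
  rw [hw1] at hwN
  obtain ⟨d, hd, hnil⟩ := hNnil
  have h10 : (1 : B) = 0 := by
    have h := hnil (List.replicate d (1 : B)) (by simp) (by
      intro x hx
      rw [List.eq_of_mem_replicate hx]
      exact hwN)
    simpa using h
  have h1A : (1 : A) = 0 := by
    have h := congrArg (Subtype.val) h10
    simpa using h
  exact one_ne_zero h1A
end

section
/- Let x be an element of a Lie algebra L over a field F with ad(x)^3 = 0 (a Jordan element), and write X = ad(x). Then for every a ∈ L, with A = ad(a), one has X^2 A X = X A X^2 as operators on L. -/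
/-- If `x` is a Jordan element (`ad(x)^3 = 0`) of a Lie algebra `L` over a field of
characteristic `≠ 2, 3`, then `X² A X = X A X²` for every `a ∈ L`, where `X = ad x`,
`A = ad a`. -/
theorem stmt7 {F L : Type*} [Field F] [LieRing L] [LieAlgebra F L]
    (h2 : (2 : F) ≠ 0) (h3 : (3 : F) ≠ 0)
    (x : L) (hx : (LieAlgebra.ad F L x) ^ 3 = 0) (a : L) :
    (LieAlgebra.ad F L x) ^ 2 * LieAlgebra.ad F L a * LieAlgebra.ad F L x =
      LieAlgebra.ad F L x * LieAlgebra.ad F L a * (LieAlgebra.ad F L x) ^ 2 := by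
  set X := LieAlgebra.ad F L x with hX
  set A := LieAlgebra.ad F L a with hA
  have hX3 : X * X * X = 0 := by
    have := hx; rwa [pow_succ, pow_succ, pow_one] at this
  have h0 : ⁅x, ⁅x, ⁅x, a⁆⁆⁆ = 0 := by
    have := LinearMap.congr_fun hx a
    simpa [pow_succ, hX, LieAlgebra.ad_apply] using this
  have key : ⁅X, ⁅X, ⁅X, A⁆⁆⁆ = 0 := by
    rw [hX, hA]
    simp only [← LieHom.map_lie, h0, map_zero]
  rw [Ring.lie_def, Ring.lie_def, Ring.lie_def] at key
  have h1 : X * X * X * A = 0 := by rw [hX3, zero_mul]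
  have h2' : A * (X * X * X) = 0 := by rw [hX3, mul_zero]
  have e : (3 : F) • (X * A * (X * X) - X * X * A * X) = 0 := by
    have e0 : X * A * (X * X) - X * X * A * X
        + (X * A * (X * X) - X * X * A * X)
        + (X * A * (X * X) - X * X * A * X) = 0 := by
      linear_combination (norm := noncomm_ring) key - h1 + h2'
    have : ((3 : ℕ) : F) • (X * A * (X * X) - X * X * A * X) = 0 := by
      rw [Nat.cast_smul_eq_nsmul]
      calc (3 : ℕ) • (X * A * (X * X) - X * X * A * X)
          = X * A * (X * X) - X * X * A * X
            + (X * A * (X * X) - X * X * A * X)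
            + (X * A * (X * X) - X * X * A * X) := by
            rw [show (3:ℕ) = 1 + 1 + 1 from rfl, add_smul, add_smul, one_smul]
        _ = 0 := e0
    simpa using this
  have h := sub_eq_zero.mp ((smul_eq_zero.mp e).resolve_left h3)
  rw [pow_two]
  exact h.symm
end

section
/- Let x be a Jordan element of a Lie algebra L (i.e., ad(x)^3 = 0) over a field of characteristic ≠ 2, 3, and write X = ad(x). Then X^2 A X^2 = 0 for every a ∈ L, where A = ad(a). -/
/-- If `x` is a Jordan element (`ad(x)^3 = 0`) of a Lie algebra `L` over a field of
characteristic `≠ 2, 3`, then `X² A X² = 0` for every `a ∈ L`, where `X = ad x`, `A = ad a`. -/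
theorem stmt8 {F L : Type*} [Field F] [LieRing L] [LieAlgebra F L]
    (h2 : (2 : F) ≠ 0) (h3 : (3 : F) ≠ 0)
    (x : L) (hx : (LieAlgebra.ad F L x) ^ 3 = 0) (a : L) :
    (LieAlgebra.ad F L x) ^ 2 * LieAlgebra.ad F L a * (LieAlgebra.ad F L x) ^ 2 = 0 := by
  set X := LieAlgebra.ad F L x with hX
  set A := LieAlgebra.ad F L a with hA
  have h0 : ⁅x, ⁅x, ⁅x, a⁆⁆⁆ = 0 := by
    have : (X ^ 3) a = 0 := by rw [hx]; rfl
    simpa [pow_succ, hX, LieAlgebra.ad_apply] using this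
  have h1 : ⁅X, ⁅X, ⁅X, A⁆⁆⁆ = 0 := by
    letI : LieRing (Module.End F L) := LieRing.ofAssociativeRing
    rw [hX, hA, ← (LieAlgebra.ad F L).map_lie, ← (LieAlgebra.ad F L).map_lie, ← (LieAlgebra.ad F L).map_lie, h0,
      map_zero]
  have expand : ⁅X, ⁅X, ⁅X, A⁆⁆⁆
      = X ^ 3 * A - (3 : ℕ) • (X ^ 2 * A * X) + (3 : ℕ) • (X * A * X ^ 2) - A * X ^ 3 := by
    simp only [Ring.lie_def]
    noncomm_ring
  rw [expand, hx] at h1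
  have h1' : (3 : ℕ) • (X * A * X ^ 2) = (3 : ℕ) • (X ^ 2 * A * X) := by
    have := h1
    simp only [zero_mul, mul_zero, zero_sub, sub_zero] at this
    linear_combination (norm := abel) this
  have hkey : X * A * X ^ 2 = X ^ 2 * A * X := by
    apply smul_right_injective (Module.End F L) h3
    rw [← Nat.cast_smul_eq_nsmul F 3 (X * A * X ^ 2), ← Nat.cast_smul_eq_nsmul F 3] at h1'
    simpa using h1'
  calc X ^ 2 * A * X ^ 2 = (X ^ 2 * A * X) * X := by
        noncomm_ring
      _ = (X * A * X ^ 2) * X := by rw [hkey]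
      _ = X * A * X ^ 3 := by rw [mul_assoc, ← pow_succ]
      _ = 0 := by rw [hx, mul_zero]
end

section
/- Let x be a Jordan element of a Lie algebra L (ad(x)^3 = 0) over a field of characteristic ≠ 2, 3. Then for all a, b ∈ L: [ad(x)^2(a), ad(x)(b)] = −[ad(x)(a), ad(x)^2(b)]. -/
/-- If `x` is a Jordan element (`ad(x)^3 = 0`) of a Lie algebra `L` over a field of
characteristic `≠ 2, 3`, then `[X²(a), X(b)] = -[X(a), X²(b)]` for all `a, b ∈ L`. -/
theorem stmt9 {F L : Type*} [Field F] [LieRing L] [LieAlgebra F L]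
    (h2 : (2 : F) ≠ 0) (h3 : (3 : F) ≠ 0)
    (x : L) (hx : (LieAlgebra.ad F L x) ^ 3 = 0) (a b : L) :
    ⁅((LieAlgebra.ad F L x) ^ 2) a, (LieAlgebra.ad F L x) b⁆ =
      -⁅(LieAlgebra.ad F L x) a, ((LieAlgebra.ad F L x) ^ 2) b⁆ := by
  set X := LieAlgebra.ad F L x with hXdef
  have hD : ∀ u v : L, X ⁅u, v⁆ = ⁅X u, v⁆ + ⁅u, X v⁆ := by
    intro u v
    simp only [hXdef, LieAlgebra.ad_apply]
    exact leibniz_lie x u v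
  have hX3 : ∀ v : L, X (X (X v)) = 0 := by
    intro v
    have := LinearMap.congr_fun hx v
    simpa [pow_succ, Module.End.mul_apply] using this
  have hexp : X (X (X ⁅a, b⁆)) =
      ⁅X (X (X a)), b⁆ + (3 : ℕ) • ⁅X (X a), X b⁆ + (3 : ℕ) • ⁅X a, X (X b)⁆
        + ⁅a, X (X (X b))⁆ := by
    simp only [hD, map_add]
    abel
  have h0 : (3 : ℕ) • (⁅X (X a), X b⁆ + ⁅X a, X (X b)⁆) = 0 := by
    have h := hexp
    rw [hX3, hX3 a, hX3 b, zero_lie, lie_zero, zero_add, add_zero] at h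
    rw [smul_add]
    exact h.symm
  have key : ⁅X (X a), X b⁆ + ⁅X a, X (X b)⁆ = 0 := by
    have h0' : (3 : F) • (⁅X (X a), X b⁆ + ⁅X a, X (X b)⁆) = 0 := by
      rw [show (3 : F) = ((3 : ℕ) : F) by norm_num, Nat.cast_smul_eq_nsmul]
      exact h0
    rcases smul_eq_zero.mp h0' with h | h
    · exact absurd h h3
    · exact h
  have e1 : (X ^ 2) a = X (X a) := by simp [pow_succ, Module.End.mul_apply]
  have e2 : (X ^ 2) b = X (X b) := by simp [pow_succ, Module.End.mul_apply]
  rw [e1, e2]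
  exact eq_neg_of_add_eq_zero_left key
end

section
/- Let x be a Jordan element of a Lie algebra L (ad(x)^3 = 0) over a field of characteristic ≠ 2, 3. Then for all a, b ∈ L: ad(x)^2([[a,x],b]) = ad(x)^2([[b,x],a]). -/
/-- If `x` is a Jordan element (`ad(x)^3 = 0`) of a Lie algebra `L` over a field of
characteristic `≠ 2, 3`, then `ad(x)²([[a,x],b]) = ad(x)²([[b,x],a])` for all `a, b ∈ L`. -/
theorem stmt10 {F L : Type*} [Field F] [LieRing L] [LieAlgebra F L]
    (h2 : (2 : F) ≠ 0) (h3 : (3 : F) ≠ 0)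
    (x : L) (hx : (LieAlgebra.ad F L x) ^ 3 = 0) (a b : L) :
    ((LieAlgebra.ad F L x) ^ 2) ⁅⁅a, x⁆, b⁆ = ((LieAlgebra.ad F L x) ^ 2) ⁅⁅b, x⁆, a⁆ := by
  have key : ⁅⁅a, x⁆, b⁆ = ⁅⁅b, x⁆, a⁆ - ⁅x, ⁅a, b⁆⁆ := by
    rw [lie_lie a x b, ← lie_skew x b, lie_neg, ← lie_skew ⁅b, x⁆ a]
  rw [key, map_sub]
  have h0 : ((LieAlgebra.ad F L x) ^ 2) ⁅x, ⁅a, b⁆⁆ = ((LieAlgebra.ad F L x) ^ 3) ⁅a, b⁆ := by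
    rw [pow_succ' (LieAlgebra.ad F L x) 2]
    rfl
  rw [h0, hx]
  simp
end

section
/- Let x be a Jordan element of a Lie algebra L (ad(x)^3 = 0) over a field of characteristic ≠ 2, 3. Then for every a ∈ L, the operator identity ad(ad(x)^2(a))^2 = ad(x)^2 ∘ ad(a)^2 ∘ ad(x)^2 holds on L. -/
/-- If `x` is a Jordan element (`ad(x)^3 = 0`) of a Lie algebra `L` over a field of
characteristic `≠ 2, 3`, then `ad(X²(a))² = X² A² X²` for every `a ∈ L`. -/
theorem stmt11 {F L : Type*} [Field F] [LieRing L] [LieAlgebra F L]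
    (h2 : (2 : F) ≠ 0) (h3 : (3 : F) ≠ 0)
    (x : L) (hx : (LieAlgebra.ad F L x) ^ 3 = 0) (a : L) :
    (LieAlgebra.ad F L (((LieAlgebra.ad F L x) ^ 2) a)) ^ 2 =
      (LieAlgebra.ad F L x) ^ 2 * (LieAlgebra.ad F L a) ^ 2 * (LieAlgebra.ad F L x) ^ 2 := by
  set X : Module.End F L := LieAlgebra.ad F L x with hX
  set A : Module.End F L := LieAlgebra.ad F L a with hA
  -- ad of a bracket
  have had : ∀ b : L, LieAlgebra.ad F L ⁅x, b⁆
      = X * LieAlgebra.ad F L b - LieAlgebra.ad F L b * X := by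
    intro b
    rw [hX]; ext y; simp only [LieAlgebra.ad_apply, LinearMap.sub_apply, Module.End.mul_apply]; rw [leibniz_lie x b y]; abel
  have hXa : (X ^ 2) a = ⁅x, ⁅x, a⁆⁆ := by
    simp [pow_two, Module.End.mul_apply, hX, LieAlgebra.ad_apply]
  set B : Module.End F L := X ^ 2 * A - (X * A * X + X * A * X) + A * X ^ 2 with hBdef
  have hB : LieAlgebra.ad F L ((X ^ 2) a) = B := by
    rw [hXa, had, had, ← hA, hBdef]
    noncomm_ring
  have hX3a : (X ^ 3) a = 0 := by rw [hx]; rfl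
  -- the key relation from ad((X^3) a) = 0
  have hXB : X * B - B * X = 0 := by
    have h1 : LieAlgebra.ad F L ⁅x, (X ^ 2) a⁆ = X * B - B * X := by
      rw [had, hB]
    have h2' : ⁅x, (X ^ 2) a⁆ = (X ^ 3) a := by
      rw [show (X : Module.End F L) ^ 3 = X * X ^ 2 from pow_succ' X 2, Module.End.mul_apply]
      exact (LieAlgebra.ad_apply F L x ((X ^ 2) a)).symm
    rw [h2', hX3a] at h1
    rw [← h1, map_zero]
  have hexp : X * B - B * X = X ^ 3 * A - A * X ^ 3
      + ((X * A * X ^ 2 + X * A * X ^ 2 + X * A * X ^ 2)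
        - (X ^ 2 * A * X + X ^ 2 * A * X + X ^ 2 * A * X)) := by
    rw [hBdef]; noncomm_ring
  rw [hXB, hx] at hexp
  have hsum : X * A * X ^ 2 + X * A * X ^ 2 + X * A * X ^ 2
      = X ^ 2 * A * X + X ^ 2 * A * X + X ^ 2 * A * X := by
    have h := hexp.symm
    simp only [zero_mul, mul_zero, sub_zero, zero_sub, zero_add] at h
    rw [sub_eq_zero] at h
    exact h
  -- divide by 3
  have h1 : X * A * X ^ 2 = X ^ 2 * A * X := by
    have e3 : ∀ T : Module.End F L, (3 : F) • T = T + T + T := by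
      intro T
      rw [show (3 : F) = 1 + 1 + 1 by norm_num, add_smul, add_smul, one_smul]
    have h9 : (3 : F) • (X * A * X ^ 2) = (3 : F) • (X ^ 2 * A * X) := by
      rw [e3, e3, hsum]
    exact smul_right_injective _ h3 h9
  -- X^2 A X^2 = 0
  have hz : X ^ 2 * A * X ^ 2 = 0 := by
    have e1 : X ^ 2 * A * X ^ 2 = (X ^ 2 * A * X) * X := by noncomm_ring
    have e2 : (X * A * X ^ 2) * X = X * A * X ^ 3 := by noncomm_ring
    rw [e1, ← h1, e2, hx, mul_zero]
  -- master expansion: a pure ring identity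
  have master : B ^ 2 = X ^ 2 * A ^ 2 * X ^ 2
      + (X ^ 2 * A * X ^ 2) * A + A * (X ^ 2 * A * X ^ 2)
      - ((X ^ 2 * A * X - X * A * X ^ 2) * (A * X)
        + (X ^ 2 * A * X - X * A * X ^ 2) * (A * X))
      + (X * A * (X ^ 2 * A * X - X * A * X ^ 2)
        + X * A * (X ^ 2 * A * X - X * A * X ^ 2))
      - (X * A * X ^ 3 * A + X * A * X ^ 3 * A)
      + A * (X ^ 3 * X) * A
      - (A * X ^ 3 * (A * X) + A * X ^ 3 * (A * X)) := by
    rw [hBdef]; noncomm_ring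
  rw [hB, master, hz, hx, ← h1, sub_self]
  simp
end

section
/- Let x be a Jordan element of a Lie algebra L (ad(x)^3 = 0) over a field of characteristic ≠ 2, 3. Then for every a ∈ L, the element ad(x)^2(a) is again a Jordan element, i.e., ad([x,[x,a]])^3 = 0. -/
/-- Purely ring-theoretic core: if `X*X*X = 0`, `Y = [X,[X,A]]`, and `X` commutes with `Y`
in an algebra over a field of characteristic `≠ 3`, then `Y*Y*Y = 0`. -/
theorem stmt12_aux {F R : Type*} [Field F] [Ring R] [Algebra F R] (h3 : (3 : F) ≠ 0)
    (X A Y : R) (hx3 : X * X * X = 0)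
    (hY : Y = X * (X * A - A * X) - (X * A - A * X) * X)
    (hcomm : X * Y = Y * X) : Y * Y * Y = 0 := by
  have h3F : ((3 : ℕ) : F) ≠ 0 := by exact_mod_cast h3
  -- Relation 1 : X²AX = XAX²
  have hR1 : X*X*A*X - X*A*X*X = 0 := by
    have h : (3 : ℕ) • (X*X*A*X - X*A*X*X)
        = (Y*X - X*Y) + ((X*X*X)*A - A*(X*X*X)) := by
      rw [hY]; noncomm_ring
    rw [hcomm, hx3, mul_zero, zero_mul, sub_self, sub_self, add_zero] at h
    have h' : ((3 : ℕ) : F) • (X*X*A*X - X*A*X*X) = 0 := by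
      rw [Nat.cast_smul_eq_nsmul]; exact h
    exact (smul_eq_zero.mp h').resolve_left h3F
  -- Commutation pushed one step : X²Y = XYX
  have hc2 : X*X*Y = X*Y*X := by
    rw [mul_assoc, hcomm, ← mul_assoc, hcomm]
  -- Relation 2 : X²AX² = 0
  have hR2 : X*X*A*X*X = 0 := by
    have h : (3 : ℕ) • (X*X*A*X*X)
        = (X*X*Y - X*Y*X) - (X*X*X)*(X*A) + 3*((X*X*X)*(A*X)) + (X*A)*(X*X*X) := by
      rw [hY]; noncomm_ring
    rw [hc2, hx3, sub_self, zero_sub, zero_mul, neg_zero, zero_mul, mul_zero,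
      zero_add, mul_zero, add_zero] at h
    have h' : ((3 : ℕ) : F) • (X*X*A*X*X) = 0 := by
      rw [Nat.cast_smul_eq_nsmul]; exact h
    exact (smul_eq_zero.mp h').resolve_left h3F
  -- Certificate for Y³ in terms of the relations
  have hkey : Y*Y*Y =
        (X*X*A*X*X)*(A*X*X*A)
      - 2*(X*X*A*X*X)*(A*X*A*X)
      + (X*X*A*X*X)*(A*A*X*X)
      - 2*(X*X*A*X*A)*(X*X*X)*(A)
      + 4*(X*X*A*X - X*A*X*X)*(A*X*X*A*X)
      - 2*(X*X*A*X - X*A*X*X)*(A*X*A*X*X)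
      + (X*X*A*A)*(X*X*X)*(X*A)
      - 2*(X*X*A*A)*(X*X*X)*(A*X)
      + (X*X*A*A)*(X*X*A*X*X)
      - 2*(X*A)*(X*X*X)*(A*X*X*A)
      + 4*(X*A)*(X*X*X)*(A*X*A*X)
      - 2*(X*A)*(X*X*X)*(A*A*X*X)
      + 4*(X*A*X*X*A)*(X*X*X)*(A)
      - 4*(X*A)*(X*X*A*X*X)*(A*X)
      + 2*(X*A)*(X*X*A*X - X*A*X*X)*(A*X*X)
      - 2*(X*A*X*A)*(X*X*X)*(X*A)
      + 4*(X*A*X*A)*(X*X*X)*(A*X)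
      + (A)*(X*X*X)*(X*A*X*X*A)
      - 2*(A)*(X*X*X)*(X*A*X*A*X)
      + (A)*(X*X*X)*(X*A*A*X*X)
      - 2*(A)*(X*X*X)*(A*X*X*X*A)
      + 4*(A)*(X*X*X)*(A*X*X*A*X)
      - 2*(A)*(X*X*X)*(A*X*A*X*X)
      + (A*X*X*A)*(X*X*X)*(X*A)
      - 2*(A*X*X*A)*(X*X*X)*(A*X)
      + (A)*(X*X*A*X*X)*(A*X*X) := by
    rw [hY]; noncomm_ring
  rw [hR1, hR2, hx3] at hkey
  simpa using hkey

attribute [local instance 100] LieRing.ofAssociativeRing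

/-- If `x` is a Jordan element (`ad(x)^3 = 0`) of a Lie algebra `L` over a field of
characteristic `≠ 2, 3`, then `ad(x)²(a) = [x,[x,a]]` is again a Jordan element. -/
theorem stmt12 {F L : Type*} [Field F] [LieRing L] [LieAlgebra F L]
    (h2 : (2 : F) ≠ 0) (h3 : (3 : F) ≠ 0)
    (x : L) (hx : (LieAlgebra.ad F L x) ^ 3 = 0) (a : L) :
    (LieAlgebra.ad F L ⁅x, ⁅x, a⁆⁆) ^ 3 = 0 := by
  have hx3 : LieAlgebra.ad F L x * LieAlgebra.ad F L x * LieAlgebra.ad F L x = 0 := by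
    rw [← pow_two, ← pow_succ]; exact hx
  have hY : LieAlgebra.ad F L ⁅x, ⁅x, a⁆⁆ =
      LieAlgebra.ad F L x * (LieAlgebra.ad F L x * LieAlgebra.ad F L a
        - LieAlgebra.ad F L a * LieAlgebra.ad F L x)
      - (LieAlgebra.ad F L x * LieAlgebra.ad F L a
        - LieAlgebra.ad F L a * LieAlgebra.ad F L x) * LieAlgebra.ad F L x := by
    rw [LieHom.map_lie, LieHom.map_lie, Ring.lie_def, Ring.lie_def]
  have hxy : ⁅x, ⁅x, ⁅x, a⁆⁆⁆ = 0 := by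
    have h : (LieAlgebra.ad F L x * LieAlgebra.ad F L x * LieAlgebra.ad F L x) a
        = (0 : Module.End F L) a := by rw [hx3]
    simpa [Module.End.mul_apply, LieAlgebra.ad_apply] using h
  have hcomm : LieAlgebra.ad F L x * LieAlgebra.ad F L ⁅x, ⁅x, a⁆⁆
      = LieAlgebra.ad F L ⁅x, ⁅x, a⁆⁆ * LieAlgebra.ad F L x := by
    have h : LieAlgebra.ad F L ⁅x, ⁅x, ⁅x, a⁆⁆⁆ = 0 := by rw [hxy]; exact (LieAlgebra.ad F L).map_zero
    rw [LieHom.map_lie, Ring.lie_def] at h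
    exact sub_eq_zero.mp h
  have := stmt12_aux (R := Module.End F L) h3
    (LieAlgebra.ad F L x) (LieAlgebra.ad F L a) (LieAlgebra.ad F L ⁅x, ⁅x, a⁆⁆)
    hx3 hY hcomm
  rw [pow_succ, pow_succ, pow_one]
  exact this
end

section
/- Let x be a Jordan element of a Lie algebra L (ad(x)^3 = 0) over a field of characteristic ≠ 2, 3. Define a bilinear product on L by a • b := [[a,x],b]. Then ker_L(x) = {a ∈ L : [x,[x,a]] = 0} is a two-sided ideal of the nonassociative algebra (L, •). -/
/-- Let `x` be a Jordan element (`ad(x)^3 = 0`) of a Lie algebra `L` over a field of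
characteristic `≠ 2, 3`, and equip `L` with the product `a • b := [[a,x],b]`.
Then `ker_L(x) = {a | [x,[x,a]] = 0}` is a two-sided ideal of this nonassociative algebra:
for `a ∈ ker_L(x)` and arbitrary `b ∈ L`, both `a • b` and `b • a` lie in `ker_L(x)`. -/
theorem stmt13 {F L : Type*} [Field F] [LieRing L] [LieAlgebra F L]
    (h2 : (2 : F) ≠ 0) (h3 : (3 : F) ≠ 0)
    (x : L) (hx : (LieAlgebra.ad F L x) ^ 3 = 0)
    (a : L) (ha : ⁅x, ⁅x, a⁆⁆ = 0) (b : L) :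
    ⁅x, ⁅x, ⁅⁅a, x⁆, b⁆⁆⁆ = 0 ∧ ⁅x, ⁅x, ⁅⁅b, x⁆, a⁆⁆⁆ = 0 := by
  have hb3 : ⁅x, ⁅x, ⁅x, b⁆⁆⁆ = 0 := by
    have := LinearMap.congr_fun hx b
    simpa [pow_succ, Module.End.mul_apply, LieAlgebra.ad_apply] using this
  have hab3 : ⁅x, ⁅x, ⁅x, ⁅a, b⁆⁆⁆⁆ = 0 := by
    have := LinearMap.congr_fun hx ⁅a, b⁆
    simpa [pow_succ, Module.End.mul_apply, LieAlgebra.ad_apply] using this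
  set K := ⁅⁅x, a⁆, ⁅x, ⁅x, b⁆⁆⁆ with hK
  have s2 : ⁅x, ⁅x, ⁅a, b⁆⁆⁆ =
      ⁅⁅x, a⁆, ⁅x, b⁆⁆ + (⁅⁅x, a⁆, ⁅x, b⁆⁆ + ⁅a, ⁅x, ⁅x, b⁆⁆⁆) := by
    rw [leibniz_lie x a b, lie_add, leibniz_lie x ⁅x, a⁆ b, leibniz_lie x a ⁅x, b⁆,
      ha, zero_lie, zero_add]
  have h9 : K + K + K = 0 := by
    rw [← hab3, s2, lie_add, lie_add, leibniz_lie x ⁅x, a⁆ ⁅x, b⁆, ha, zero_lie, zero_add,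
      leibniz_lie x a ⁅x, ⁅x, b⁆⁆, hb3, lie_zero, add_zero]
    abel
  have key : K = 0 := by
    have h3' : (3 : F) • K = 0 := by
      have hcast : ((3 : ℕ) : F) • K = (3 : ℕ) • K := Nat.cast_smul_eq_nsmul F 3 K
      have hn : (3 : ℕ) • K = K + K + K := by
        rw [succ_nsmul, succ_nsmul, one_nsmul]
      rw [show (3 : F) = ((3 : ℕ) : F) by norm_num, hcast, hn, h9]
    exact (smul_eq_zero.mp h3').resolve_left h3
  constructor
  · rw [show ⁅a, x⁆ = -⁅x, a⁆ by rw [← lie_skew x a, neg_neg]]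
    rw [neg_lie, lie_neg, lie_neg, neg_eq_zero,
      leibniz_lie x ⁅x, a⁆ b, ha, zero_lie, zero_add,
      leibniz_lie x ⁅x, a⁆ ⁅x, b⁆, ha, zero_lie, zero_add, ← hK, key]
  · rw [show ⁅b, x⁆ = -⁅x, b⁆ by rw [← lie_skew x b, neg_neg]]
    rw [neg_lie, lie_neg, lie_neg, neg_eq_zero,
      leibniz_lie x ⁅x, b⁆ a, lie_add,
      leibniz_lie x ⁅x, ⁅x, b⁆⁆ a, hb3, zero_lie, zero_add,
      leibniz_lie x ⁅x, b⁆ ⁅x, a⁆, ha, lie_zero, add_zero]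
    have hM : ⁅⁅x, ⁅x, b⁆⁆, ⁅x, a⁆⁆ = -K := by
      rw [hK, ← lie_skew]
    rw [hM, key, neg_zero, add_zero]
end

section
/- Let L be a Lie algebra over a field F generated by a set X such that for every x ∈ X, ad(x)^d = 0 for some fixed d with d ≤ char F or char F = 0, and exp(ξ·ad(x)) is a well-defined automorphism of L for every ξ ∈ F. If F has more than d elements and V is a subspace of L invariant under all automorphisms of L, then V is an ideal of L. -/
open Matrix in
lemma vandermonde_mem {F M : Type*} [Field F] [AddCommGroup M] [Module F M]
    (V : Submodule F M) {n : ℕ} (c : Fin n → M) (f : Fin n → F)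
    (hf : Function.Injective f)
    (h : ∀ j : Fin n, ∑ i : Fin n, (f j) ^ (i : ℕ) • c i ∈ V) :
    ∀ i, c i ∈ V := by
  intro i
  set A := Matrix.vandermonde f with hA
  have hdet : IsUnit A.det := by
    rw [isUnit_iff_ne_zero, hA, Matrix.det_vandermonde_ne_zero_iff]
    exact hf
  have key : c i = ∑ j : Fin n, (A⁻¹ i j) • ∑ k : Fin n, A j k • c k := by
    have : ∀ j, (A⁻¹ i j) • ∑ k : Fin n, A j k • c k
        = ∑ k : Fin n, (A⁻¹ i j * A j k) • c k := by
      intro j; rw [Finset.smul_sum]; simp [smul_smul]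
    simp_rw [this]
    rw [Finset.sum_comm]
    have : ∀ k, ∑ j : Fin n, (A⁻¹ i j * A j k) • c k = ((A⁻¹ * A) i k) • c k := by
      intro k; rw [← Finset.sum_smul]; rfl
    simp_rw [this, Matrix.nonsing_inv_mul A hdet]
    simp [Matrix.one_apply]
  rw [key]
  exact Submodule.sum_mem _ fun j _ => Submodule.smul_mem _ _ (by
    simpa [hA, Matrix.vandermonde] using h j)



/-- The truncated exponential `exp(ξ · ad x) = ∑_{i<d} (ξ^i / i!) (ad x)^i`. -/
noncomputable def expAd {F L : Type*} [Field F] [LieRing L] [LieAlgebra F L]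
    (d : ℕ) (ξ : F) (x : L) : Module.End F L :=
  ∑ i ∈ Finset.range d, (ξ ^ i * ((Nat.factorial i : F)⁻¹)) • (LieAlgebra.ad F L x) ^ i

/-- Let `L` be a Lie algebra over a field `F` generated by a set `X` such that
`ad(x)^d = 0` for every `x ∈ X`, where `d ≤ char F` or `char F = 0` (so the factorials
`i!`, `i < d`, are invertible in `F`) and each truncated exponential
`exp(ξ · ad x)` is a well-defined automorphism of `L`.  If `F` has more than `d` elements
and `V` is a subspace of `L` invariant under all (Lie algebra) automorphisms of `L`,
then `V` is an ideal of `L`. -/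
theorem stmt15 {F L : Type*} [Field F] [LieRing L] [LieAlgebra F L]
    (X : Set L) (hgen : LieSubalgebra.lieSpan F L X = ⊤)
    (d : ℕ)
    (hchar : ringChar F = 0 ∨ d ≤ ringChar F)
    (hfac : ∀ i : ℕ, i < d → (Nat.factorial i : F) ≠ 0)
    (hd : ∀ x ∈ X, (LieAlgebra.ad F L x) ^ d = 0)
    (hexp : ∀ x ∈ X, ∀ ξ : F,
      Function.Bijective (expAd d ξ x) ∧
      ∀ a b : L, expAd d ξ x ⁅a, b⁆ = ⁅expAd d ξ x a, expAd d ξ x b⁆)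
    (hcard : ∃ f : Fin (d + 1) → F, Function.Injective f)
    (V : Submodule F L)
    (hV : ∀ e : L ≃ₗ⁅F⁆ L, ∀ v ∈ V, e v ∈ V) :
    ∀ a : L, ∀ v ∈ V, ⁅a, v⁆ ∈ V := by
  let K : LieSubalgebra F L :=
    { carrier := {a | ∀ v ∈ V, ⁅a, v⁆ ∈ V}
      add_mem' := fun {a b} ha hb v hv => by
        rw [add_lie]; exact V.add_mem (ha v hv) (hb v hv)
      zero_mem' := fun v hv => by rw [zero_lie]; exact V.zero_mem
      smul_mem' := fun t a ha v hv => by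
        rw [smul_lie]; exact V.smul_mem t (ha v hv)
      lie_mem' := fun {a b} ha hb v hv => by
        rw [lie_lie]; exact V.sub_mem (ha _ (hb v hv)) (hb _ (ha v hv)) }
  have hXK : X ⊆ K := by
    intro x hx v hv
    have hmem : ∀ ξ : F, expAd d ξ x v ∈ V := by
      intro ξ
      obtain ⟨hbij, hbr⟩ := hexp x hx ξ
      let le := LinearEquiv.ofBijective (expAd d ξ x) hbij
      let e : L ≃ₗ⁅F⁆ L :=
        { toLieHom := { le.toLinearMap with map_lie' := fun {a b} => hbr a b }
          invFun := le.invFun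
          left_inv := le.left_inv
          right_inv := le.right_inv }
      exact hV e v hv
    match d, hd x hx, hmem, hcard with
    | 0, h0, _, _ =>
      have : ⁅x, v⁆ = 0 := by
        have := congrArg (fun φ : Module.End F L => φ ⁅x, v⁆) h0
        simpa using this
      rw [this]; exact V.zero_mem
    | 1, h1, _, _ =>
      have : ⁅x, v⁆ = 0 := by
        have := congrArg (fun φ : Module.End F L => φ v) h1
        simpa [LieAlgebra.ad_apply] using this
      rw [this]; exact V.zero_mem
    | (n + 2), _, hmem, ⟨f, hf⟩ =>
      set c : Fin (n + 2) → L :=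
        fun i => ((Nat.factorial (i : ℕ) : F)⁻¹) • ((LieAlgebra.ad F L x) ^ (i : ℕ)) v with hc
      have hall : ∀ i, c i ∈ V := by
        apply vandermonde_mem V c (f ∘ Fin.castSucc)
          (hf.comp (Fin.castSucc_injective _))
        intro j
        have heq : ∑ i : Fin (n + 2), ((f ∘ Fin.castSucc) j) ^ (i : ℕ) • c i
            = expAd (n + 2) (f (Fin.castSucc j)) x v := by
          rw [expAd, LinearMap.sum_apply,
            ← Fin.sum_univ_eq_sum_range
              (fun i => (((f (Fin.castSucc j)) ^ i * ((Nat.factorial i : F)⁻¹)) •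
                (LieAlgebra.ad F L x) ^ i) v)]
          simp [hc, mul_smul]
        rw [heq]
        exact hmem _
      have h1 := hall ⟨1, by omega⟩
      simpa [hc, Nat.factorial] using h1
  intro a
  have h : LieSubalgebra.lieSpan F L X ≤ K := (LieSubalgebra.lieSpan_le).2 hXK
  rw [hgen] at h
  exact h (LieSubalgebra.mem_top a)
end

section
/- The direct limit R = lim→ R_i of the algebras R_i = M_{p^i}(F) ⊕ M_{p^i}(F) under the embeddings φ_i of signature (k+1, k) (p = 2k+1 an odd prime, F a field) is a simple associative algebra. -/
/-- `Mₚᵢ(F)`, the full matrix algebra of size `pⁱ` with `p = 2k+1`. -/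
abbrev MatP (F : Type*) (k i : ℕ) : Type _ :=
  Matrix (Fin ((2 * k + 1) ^ i)) (Fin ((2 * k + 1) ^ i)) F

/-- `Rᵢ = M_{pⁱ}(F) ⊕ M_{pⁱ}(F)`. -/
abbrev Rlev (F : Type*) (k i : ℕ) : Type _ := MatP F k i × MatP F k i

/-- Reindexing equivalence `Fin pⁱ × Fin p ≃ Fin pⁱ⁺¹`. -/
def finPowEquiv (k i : ℕ) :
    Fin ((2 * k + 1) ^ i) × Fin (2 * k + 1) ≃ Fin ((2 * k + 1) ^ (i + 1)) :=
  finProdFinEquiv.trans (finCongr (pow_succ (2 * k + 1) i).symm)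

/-- `diag(M,…,M,N,…,N)` with `k+1` copies of `M` and `k` copies of `N`, viewed as a
matrix of size `pⁱ⁺¹`. -/
def stepMat {F : Type*} [Zero F] {k i : ℕ} (M N : MatP F k i) : MatP F k (i + 1) :=
  Matrix.reindex (finPowEquiv k i) (finPowEquiv k i)
    (Matrix.blockDiagonal fun j : Fin (2 * k + 1) => if (j : ℕ) < k + 1 then M else N)

/-- The embedding `φᵢ : Rᵢ → Rᵢ₊₁` of signature `(k+1, k, 0)`. -/
def step {F : Type*} [Zero F] {k i : ℕ} (x : Rlev F k i) : Rlev F k (i + 1) :=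
  (stepMat x.1 x.2, stepMat x.2 x.1)

/-- The non-unital ring hom `a ↦ (a, 0)`. -/
def nurInl (A B : Type*) [NonUnitalNonAssocSemiring A] [NonUnitalNonAssocSemiring B] :
    A →ₙ+* A × B where
  toFun a := (a, 0)
  map_zero' := rfl
  map_add' a b := by simp [Prod.ext_iff]
  map_mul' a b := by simp [Prod.ext_iff]

/-- The non-unital ring hom `b ↦ (0, b)`. -/
def nurInr (A B : Type*) [NonUnitalNonAssocSemiring A] [NonUnitalNonAssocSemiring B] :
    A →ₙ+* B × A where
  toFun a := (0, a)
  map_zero' := rfl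
  map_add' a b := by simp [Prod.ext_iff]
  map_mul' a b := by simp [Prod.ext_iff]

/-- A two-sided ideal of `A × B` containing an element with both coordinates nonzero is
everything, provided `A` and `B` are simple. -/
lemma one_mem_prod {A B : Type*} [Ring A] [Ring B] [IsSimpleRing A] [IsSimpleRing B]
    (J : TwoSidedIdeal (A × B)) {a : A} {b : B} (ha : a ≠ 0) (hb : b ≠ 0)
    (hmem : (a, b) ∈ J) : (1 : A × B) ∈ J := by
  have h1 : ((a, 0) : A × B) ∈ J := by
    have := J.mul_mem_right _ ((1 : A), (0 : B)) hmem
    simpa using this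
  have h2 : ((0, b) : A × B) ∈ J := by
    have := J.mul_mem_right _ ((0 : A), (1 : B)) hmem
    simpa using this
  have hA : (1 : A) ∈ J.comap (nurInl A B) :=
    IsSimpleRing.one_mem_of_ne_zero_mem _ ha (by rwa [TwoSidedIdeal.mem_comap])
  have hB : (1 : B) ∈ J.comap (nurInr B A) :=
    IsSimpleRing.one_mem_of_ne_zero_mem _ hb (by rwa [TwoSidedIdeal.mem_comap])
  rw [TwoSidedIdeal.mem_comap] at hA hB
  have : ((1 : A), (0 : B)) + ((0 : A), (1 : B)) ∈ J := J.add_mem hA hB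
  have h11 : ((1 : A), (1 : B)) ∈ J := by simpa [Prod.ext_iff] using this
  exact h11

lemma stepMat_ne_zero {F : Type*} [Zero F] {k i : ℕ} (hk : 1 ≤ k) (M N : MatP F k i)
    (h : ¬ (M = 0 ∧ N = 0)) : stepMat M N ≠ 0 := by
  intro h0
  apply h
  have hb : Matrix.blockDiagonal
      (fun j : Fin (2 * k + 1) => if (j : ℕ) < k + 1 then M else N) = 0 := by
    have := congrArg (Matrix.reindex (finPowEquiv k i).symm (finPowEquiv k i).symm) h0
    simpa [stepMat] using this
  constructor
  · ext r c
    have := congrFun (congrFun hb (r, (⟨0, by omega⟩ : Fin (2 * k + 1))))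
      (c, (⟨0, by omega⟩ : Fin (2 * k + 1)))
    simpa [Matrix.blockDiagonal_apply] using this
  · ext r c
    have := congrFun (congrFun hb (r, (⟨k + 1, by omega⟩ : Fin (2 * k + 1))))
      (c, (⟨k + 1, by omega⟩ : Fin (2 * k + 1)))
    simpa [Matrix.blockDiagonal_apply] using this

/-- The direct limit `R = lim→ Rᵢ` of the algebras `Rᵢ = M_{pⁱ}(F) ⊕ M_{pⁱ}(F)` along the
signature `(k+1,k)` embeddings `φᵢ` (for `p = 2k+1` an odd prime) is a simple associative
algebra: any ring `R` realizing this direct limit (i.e. equipped with compatible ring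
homomorphisms `gᵢ : Rᵢ → R` whose ranges cover `R`) has exactly two two-sided ideals. -/
theorem stmt18 {F : Type*} [Field F] (k : ℕ) (hp : Nat.Prime (2 * k + 1))
    (R : Type*) [Ring R] [Nontrivial R]
    (g : ∀ i : ℕ, Rlev F k i →+* R)
    (hcomp : ∀ (i : ℕ) (x : Rlev F k i), g (i + 1) (step x) = g i x)
    (hcover : ∀ r : R, ∃ (i : ℕ) (x : Rlev F k i), g i x = r) :
    IsSimpleOrder (TwoSidedIdeal R) := by
  have hk : 1 ≤ k := by
    by_contra h
    interval_cases k <;> simp_all <;> exact Nat.not_prime_one hp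
  constructor
  intro I
  rcases eq_or_ne I ⊥ with hbot | hbot
  · exact Or.inl hbot
  right
  -- get a nonzero element of I
  obtain ⟨r, hrI, hr0⟩ : ∃ r : R, r ∈ I ∧ r ≠ 0 := by
    by_contra h
    push_neg at h
    apply hbot
    refine le_antisymm (fun x hx => ?_) bot_le
    rw [show x = 0 from h x hx]
    exact TwoSidedIdeal.zero_mem _
  obtain ⟨i, x, hx⟩ := hcover r
  have hxne : x ≠ 0 := by rintro rfl; simp at hx; exact hr0 hx.symm
  -- both components of `step x` are nonzero
  have h1 : (step x).1 ≠ 0 := by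
    apply stepMat_ne_zero hk
    rintro ⟨h1, h2⟩; exact hxne (Prod.ext h1 h2)
  have h2 : (step x).2 ≠ 0 := by
    apply stepMat_ne_zero hk
    rintro ⟨h1, h2⟩; exact hxne (Prod.ext h2 h1)
  -- matrix algebras of nonzero size are simple
  haveI : NeZero ((2 * k + 1) ^ (i + 1)) :=
    ⟨pow_ne_zero _ (by omega)⟩
  haveI : Nonempty (Fin ((2 * k + 1) ^ (i + 1))) :=
    Fin.pos_iff_nonempty.mp (Nat.pos_of_ne_zero (NeZero.ne _))
  haveI : IsSimpleRing (MatP F k (i + 1)) := inferInstance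
  -- pull back I along g (i+1)
  set J : TwoSidedIdeal (Rlev F k (i + 1)) := I.comap (g (i + 1)) with hJ
  have hmemJ : step x ∈ J := by
    rw [hJ, TwoSidedIdeal.mem_comap, hcomp i x, hx]
    exact hrI
  have hone : (1 : Rlev F k (i + 1)) ∈ J := by
    have := one_mem_prod J h1 h2 (by simpa using hmemJ)
    simpa using this
  have h1I : (1 : R) ∈ I := by
    rw [hJ, TwoSidedIdeal.mem_comap, map_one] at hone
    exact hone
  refine le_antisymm le_top (fun y _ => ?_)
  simpa using I.mul_mem_left y 1 h1I
end
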